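/- arXiv:2507.00820 — 11 statements merged into one kernel-verified Lean document; each statement's English description precedes it below -/
import Mathlib

section
/- Let (g_n)_{n∈ℤ} be a square-summable sequence of complex numbers and fix ζ > 0. For ε > 0 and n ∈ ℤ define a_n(ε) := exp(−i(2πζ/ε²)·√(1−(nε)²)) if |n|·ε ≤ 1 and a_n(ε) := exp(−(2πζ/ε²)·√((nε)²−1)) if |n|·ε > 1, and define b_n(ε) := exp(−2πiζ/ε² + iπζn²). Then lim_{ε→0⁺} Σ_{n∈ℤ} |g_n|² · |a_n(ε) − b_n(ε)|² = 0. -/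
open Filter Topology

theorem paraxial_limit_parseval (g : ℤ → ℂ) (hg : Summable fun n : ℤ => ‖g n‖ ^ 2)
    (ζ : ℝ) (hζ : 0 < ζ)
    (a b : ℤ → ℝ → ℂ)
    (ha : ∀ (n : ℤ) (ε : ℝ), a n ε =
      if |(n : ℝ)| * ε ≤ 1 then
        Complex.exp (-Complex.I * ((2 * Real.pi * ζ / ε ^ 2) *
          Real.sqrt (1 - ((n : ℝ) * ε) ^ 2)))
      else
        Complex.exp (-((2 * Real.pi * ζ / ε ^ 2) *
          Real.sqrt (((n : ℝ) * ε) ^ 2 - 1)) : ℝ))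
    (hb : ∀ (n : ℤ) (ε : ℝ), b n ε =
      Complex.exp (-(2 * Real.pi * ζ / ε ^ 2) * Complex.I +
        Real.pi * ζ * (n : ℂ) ^ 2 * Complex.I)) :
    Tendsto (fun ε : ℝ => ∑' n : ℤ, ‖g n‖ ^ 2 * ‖a n ε - b n ε‖ ^ 2)
      (nhdsWithin 0 (Set.Ioi 0)) (nhds 0) := by
  have hna : ∀ (n : ℤ) (ε : ℝ), ‖a n ε‖ ≤ 1 := by
    intro n ε
    rw [ha]
    split_ifs with h
    · rw [show (-Complex.I * ((2 * (Real.pi:ℂ) * (ζ:ℂ) / (ε:ℂ) ^ 2) *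
          ((Real.sqrt (1 - ((n : ℝ) * ε) ^ 2) : ℝ) : ℂ))) =
          ((-(2 * Real.pi * ζ / ε ^ 2 * Real.sqrt (1 - ((n : ℝ) * ε) ^ 2)) : ℝ) : ℂ) *
            Complex.I by push_cast; ring,
        Complex.norm_exp_ofReal_mul_I]
    · rw [Complex.norm_exp, Complex.ofReal_re, Real.exp_le_one_iff]
      have h1 : (0:ℝ) ≤ 2 * Real.pi * ζ / ε ^ 2 * Real.sqrt (((n : ℝ) * ε) ^ 2 - 1) := by
        have h2 := Real.sqrt_nonneg (((n : ℝ) * ε) ^ 2 - 1)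
        have h3 := Real.pi_pos
        positivity
      linarith
  have hnb : ∀ (n : ℤ) (ε : ℝ), ‖b n ε‖ = 1 := by
    intro n ε
    rw [hb, show (-(2 * (Real.pi:ℂ) * (ζ:ℂ) / (ε:ℂ) ^ 2) * Complex.I +
        (Real.pi:ℂ) * (ζ:ℂ) * (n : ℂ) ^ 2 * Complex.I) =
        ((-(2 * Real.pi * ζ / ε ^ 2) + Real.pi * ζ * (n:ℝ) ^ 2 : ℝ) : ℂ) * Complex.I by
          push_cast; ring,
      Complex.norm_exp_ofReal_mul_I]
  -- pointwise limit
  have hpt : ∀ n : ℤ, Tendsto (fun ε : ℝ => ‖g n‖ ^ 2 * ‖a n ε - b n ε‖ ^ 2)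
      (nhdsWithin 0 (Set.Ioi 0)) (nhds 0) := by
    intro n
    have hd : Tendsto (fun ε : ℝ => ‖a n ε - b n ε‖) (nhdsWithin 0 (Set.Ioi 0)) (nhds 0) := by
      set φ : ℝ → ℝ := fun ε =>
        2 * Real.pi * ζ * (n : ℝ) ^ 2 / (1 + Real.sqrt (1 - ((n : ℝ) * ε) ^ 2))
          - Real.pi * ζ * (n : ℝ) ^ 2 with hφ
      have hφcont : Continuous φ := by
        apply Continuous.sub _ continuous_const
        apply Continuous.div continuous_const
        · fun_prop
        · intro x
          have := Real.sqrt_nonneg (1 - ((n : ℝ) * x) ^ 2)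
          positivity
      have hφzero : φ 0 = 0 := by simp [hφ]; ring
      have hφ0 : Tendsto φ (nhdsWithin 0 (Set.Ioi 0)) (nhds 0) := by
        have h := (hφcont.tendsto 0).mono_left (nhdsWithin_le_nhds (s := Set.Ioi (0:ℝ)))
        rwa [hφzero] at h
      have key : ∀ᶠ ε in nhdsWithin (0:ℝ) (Set.Ioi 0),
          ‖a n ε - b n ε‖ = ‖Complex.exp (Complex.I * (φ ε : ℂ)) - 1‖ := by
        have hmem : Set.Ioo (0:ℝ) (1 / (|(n:ℝ)| + 1)) ∈ nhdsWithin (0:ℝ) (Set.Ioi 0) := by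
          apply Ioo_mem_nhdsGT_of_mem
          constructor
          · exact le_refl _
          · positivity
        filter_upwards [hmem] with ε hε
        obtain ⟨hε0, hε1⟩ := hε
        have habs : (0:ℝ) ≤ |(n:ℝ)| := abs_nonneg _
        have hle : |(n : ℝ)| * ε ≤ 1 := by
          have h1 : |(n:ℝ)| * ε ≤ |(n:ℝ)| * (1 / (|(n:ℝ)| + 1)) :=
            mul_le_mul_of_nonneg_left hε1.le habs
          have h2 : |(n:ℝ)| * (1 / (|(n:ℝ)| + 1)) ≤ 1 := by
            rw [mul_one_div, div_le_one (by positivity)]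
            linarith
          linarith
        have h1 : (0:ℝ) ≤ 1 - ((n : ℝ) * ε) ^ 2 := by
          have he : ((n:ℝ) * ε) ^ 2 = (|(n:ℝ)| * ε) ^ 2 := by
            rw [mul_pow, mul_pow, sq_abs]
          rw [he]
          nlinarith [mul_nonneg habs hε0.le]
        set s := Real.sqrt (1 - ((n : ℝ) * ε) ^ 2) with hs
        have hs2 : s ^ 2 = 1 - ((n : ℝ) * ε) ^ 2 := Real.sq_sqrt h1
        have hsnn : 0 ≤ s := Real.sqrt_nonneg _
        have hden : (1 + s) ≠ 0 := by positivity
        have hε2 : (ε:ℝ) ^ 2 ≠ 0 := by positivity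
        have hprod : (1 - s) * (1 + s) = ((n:ℝ) * ε) ^ 2 := by linear_combination -hs2
        have e1 : (2 * Real.pi * ζ / ε ^ 2) * (1 - s) = 2 * Real.pi * ζ * (n:ℝ) ^ 2 / (1 + s) := by
          rw [div_mul_eq_mul_div, div_eq_div_iff hε2 hden]
          linear_combination (2 * Real.pi * ζ) * hprod
        have hangle : (-(2 * Real.pi * ζ / ε ^ 2) * s : ℝ) =
            (-(2 * Real.pi * ζ / ε ^ 2) + Real.pi * ζ * (n:ℝ) ^ 2) + φ ε := by
          rw [hφ]
          simp only [← hs]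
          linear_combination e1
        have hc : ((-(2 * Real.pi * ζ / ε ^ 2) * s : ℝ) : ℂ) =
            ((-(2 * Real.pi * ζ / ε ^ 2) + Real.pi * ζ * (n:ℝ) ^ 2 : ℝ) : ℂ) + ((φ ε : ℝ) : ℂ) := by
          rw [hangle]; push_cast; ring
        have haval : a n ε = Complex.exp (Complex.I *
            ((-(2 * Real.pi * ζ / ε ^ 2) * s : ℝ) : ℂ)) := by
          rw [ha, if_pos hle, ← hs]
          congr 1
          push_cast
          ring
        have hbval : b n ε = Complex.exp (Complex.I *
            (((-(2 * Real.pi * ζ / ε ^ 2) + Real.pi * ζ * (n:ℝ) ^ 2 : ℝ)) : ℂ)) := by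
          rw [hb]
          congr 1
          push_cast
          ring
        have hdiff : a n ε - b n ε = b n ε * (Complex.exp (Complex.I * (φ ε : ℂ)) - 1) := by
          rw [haval, hbval, mul_sub, mul_one, ← Complex.exp_add]
          congr 1
          rw [← mul_add, ← hc]
        rw [hdiff, norm_mul, hnb, one_mul]
      have hlim2 : Tendsto (fun ε : ℝ => ‖Complex.exp (Complex.I * (φ ε : ℂ)) - 1‖)
          (nhdsWithin 0 (Set.Ioi 0)) (nhds 0) := by
        have hc : Continuous fun t : ℝ => ‖Complex.exp (Complex.I * (t : ℂ)) - 1‖ := by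
          fun_prop
        have h := (hc.tendsto 0).comp hφ0
        simpa [Function.comp_def] using h
      exact hlim2.congr' (by filter_upwards [key] with x hx using hx.symm)
    have h := (tendsto_const_nhds (x := ‖g n‖ ^ 2)
        (f := nhdsWithin (0:ℝ) (Set.Ioi 0))).mul (hd.pow 2)
    simpa using h
  -- dominated convergence
  have hbound : Summable fun n : ℤ => 4 * ‖g n‖ ^ 2 := hg.mul_left 4
  have h := tendsto_tsum_of_dominated_convergence (f := fun (ε : ℝ) (n : ℤ) =>
      ‖g n‖ ^ 2 * ‖a n ε - b n ε‖ ^ 2) (g := fun _ : ℤ => (0:ℝ))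
      (bound := fun n : ℤ => 4 * ‖g n‖ ^ 2) hbound hpt ?_
  · simpa using h
  · filter_upwards with ε
    intro n
    have h2 : ‖a n ε - b n ε‖ ≤ 2 := by
      calc ‖a n ε - b n ε‖ ≤ ‖a n ε‖ + ‖b n ε‖ := norm_sub_le _ _
        _ ≤ 2 := by rw [hnb]; linarith [hna n ε]
    have hnn : (0:ℝ) ≤ ‖g n‖ ^ 2 * ‖a n ε - b n ε‖ ^ 2 := by positivity
    rw [Real.norm_of_nonneg hnn]
    have h3 : ‖a n ε - b n ε‖ ^ 2 ≤ 4 := by nlinarith [norm_nonneg (a n ε - b n ε)]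
    nlinarith [sq_nonneg ‖g n‖]
end

section
/- Let (g_n)_{n∈ℤ} be an absolutely summable sequence of complex numbers and fix ζ > 0. For ε > 0 define U_ε(ξ) := Σ_{n∈ℤ} g_n a_n(ε) e^{2πinξ}, where a_n(ε) := exp(−i(2πζ/ε²)·√(1−(nε)²)) if |n|·ε ≤ 1 and a_n(ε) := exp(−(2πζ/ε²)·√((nε)²−1)) if |n|·ε > 1, and define U_Par,ε(ξ) := e^{−2πiζ/ε²} Σ_{n∈ℤ} g_n e^{2πinξ + iπζn²}. Then lim_{ε→0⁺} ∫₀¹ |U_ε(ξ) − U_Par,ε(ξ)|² dξ = 0. -/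
open Filter Topology

noncomputable def pxA (ζ : ℝ) (n : ℤ) (ε : ℝ) : ℂ :=
  if |(n : ℝ)| * ε ≤ 1 then
    Complex.exp (-Complex.I * ((2 * Real.pi * ζ / ε ^ 2) *
      Real.sqrt (1 - ((n : ℝ) * ε) ^ 2)))
  else
    Complex.exp (-((2 * Real.pi * ζ / ε ^ 2) *
      Real.sqrt (((n : ℝ) * ε) ^ 2 - 1)) : ℝ)

noncomputable def pxB (ζ : ℝ) (n : ℤ) (ε : ℝ) : ℂ :=
  Complex.exp (-(2 * Real.pi * ζ / ε ^ 2) * Complex.I +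
    Complex.I * Real.pi * ζ * (n : ℂ) ^ 2)

lemma norm_pxA_le_one (ζ : ℝ) (hζ : 0 ≤ ζ) (n : ℤ) (ε : ℝ) : ‖pxA ζ n ε‖ ≤ 1 := by
  unfold pxA
  split_ifs with h
  · have : -Complex.I * ((2 * (Real.pi:ℂ) * ζ / ε ^ 2) *
        ((Real.sqrt (1 - ((n : ℝ) * ε) ^ 2) : ℝ) : ℂ)) =
        ((-(2 * Real.pi * ζ / ε ^ 2 * Real.sqrt (1 - ((n : ℝ) * ε) ^ 2)) : ℝ) : ℂ) * Complex.I := by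
      push_cast; ring
    rw [this, Complex.norm_exp_ofReal_mul_I]
  · rw [Complex.norm_exp]
    simp only [Complex.ofReal_re]
    rw [Real.exp_le_one_iff]
    have hε : (0:ℝ) < ε := by
      push_neg at h
      nlinarith [abs_nonneg ((n:ℝ))]
    have : 0 ≤ 2 * Real.pi * ζ / ε ^ 2 := by positivity
    have := Real.sqrt_nonneg (((n : ℝ) * ε) ^ 2 - 1)
    nlinarith

lemma norm_pxB_eq_one (ζ : ℝ) (n : ℤ) (ε : ℝ) : ‖pxB ζ n ε‖ = 1 := by
  unfold pxB
  have : -(2 * (Real.pi:ℂ) * ζ / ε ^ 2) * Complex.I + Complex.I * Real.pi * ζ * (n : ℂ) ^ 2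
      = ((-(2 * Real.pi * ζ / ε ^ 2) + Real.pi * ζ * (n : ℝ) ^ 2 : ℝ) : ℂ) * Complex.I := by
    push_cast; ring
  rw [this, Complex.norm_exp_ofReal_mul_I]

lemma sqrt_est {x : ℝ} (h0 : 0 ≤ x) (h1 : x ≤ 1) :
    0 ≤ 1 - x/2 - Real.sqrt (1-x) ∧ 1 - x/2 - Real.sqrt (1-x) ≤ x^2/2 := by
  set s := Real.sqrt (1-x) with hs_def
  have hs : s^2 = 1 - x := Real.sq_sqrt (by linarith)
  have hs0 : 0 ≤ s := Real.sqrt_nonneg _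
  constructor <;> nlinarith [sq_nonneg (1-s), sq_nonneg s, sq_nonneg (s*(1-s))]

lemma exp_I_sub_exp_I (θ₁ θ₂ : ℝ) (h : |θ₁ - θ₂| ≤ 1) :
    ‖Complex.exp (θ₁ * Complex.I) - Complex.exp (θ₂ * Complex.I)‖ ≤ 2 * |θ₁ - θ₂| := by
  have heq : Complex.exp (θ₁ * Complex.I) - Complex.exp (θ₂ * Complex.I) =
      Complex.exp (θ₂ * Complex.I) * (Complex.exp (((θ₁ - θ₂ : ℝ) : ℂ) * Complex.I) - 1) := by
    rw [mul_sub, ← Complex.exp_add, mul_one]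
    push_cast; ring_nf
  rw [heq, norm_mul, Complex.norm_exp_ofReal_mul_I, one_mul]
  have habs : ‖((θ₁ - θ₂ : ℝ) : ℂ) * Complex.I‖ = |θ₁ - θ₂| := by
    rw [norm_mul, Complex.norm_I, Complex.norm_real, Real.norm_eq_abs, mul_one]
  have := Complex.norm_exp_sub_one_le (x := ((θ₁ - θ₂ : ℝ) : ℂ) * Complex.I)
    (by rw [habs]; exact h)
  rw [habs] at this
  simpa using this

lemma pxAB_bound (ζ : ℝ) (hζ : 0 < ζ) (n : ℤ) {ε : ℝ} (hε1 : 0 < ε)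
    (hε2 : ε ≤ 1) (hε3 : ε ≤ 1/((n:ℝ)^2+1)) (hε4 : ε ≤ 1/(Real.pi*ζ*(n:ℝ)^4+1)) :
    ‖pxA ζ n ε - pxB ζ n ε‖ ≤ 2 * (Real.pi * ζ * (n:ℝ)^4 * ε^2) := by
  have hπ : (0:ℝ) < Real.pi := Real.pi_pos
  have habs : |(n:ℝ)| ≤ (n:ℝ)^2 + 1 := by nlinarith [sq_nonneg (|(n:ℝ)| - 1), sq_abs ((n:ℝ))]
  have hn : |(n:ℝ)| * ε ≤ 1 := by
    have h1 : ((n:ℝ)^2+1) * ε ≤ 1 := by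
      rw [← le_div_iff₀' (by positivity)]; exact hε3
    nlinarith [abs_nonneg ((n:ℝ))]
  set x : ℝ := ((n:ℝ)*ε)^2 with hx_def
  set c : ℝ := 2*Real.pi*ζ/ε^2 with hc_def
  have hc0 : 0 ≤ c := by positivity
  have hx0 : 0 ≤ x := sq_nonneg _
  have hx1 : x ≤ 1 := by
    have : |(n:ℝ)*ε| = |(n:ℝ)| * ε := by rw [abs_mul, abs_of_pos hε1]
    nlinarith [abs_nonneg ((n:ℝ)*ε), sq_abs ((n:ℝ)*ε)]
  set θ₁ : ℝ := -(c * Real.sqrt (1-x)) with hθ₁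
  set θ₂ : ℝ := -c + Real.pi*ζ*(n:ℝ)^2 with hθ₂
  have hA : pxA ζ n ε = Complex.exp (θ₁ * Complex.I) := by
    unfold pxA; rw [if_pos hn, hθ₁, hc_def, hx_def]; congr 1; push_cast; ring
  have hB : pxB ζ n ε = Complex.exp (θ₂ * Complex.I) := by
    unfold pxB; rw [hθ₂, hc_def]; congr 1; push_cast; ring
  have hcx : Real.pi*ζ*(n:ℝ)^2 = c*x/2 := by
    rw [hc_def, hx_def]; field_simp
  have hdiff : θ₁ - θ₂ = c * (1 - x/2 - Real.sqrt (1-x)) := by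
    rw [hθ₁, hθ₂, hcx]; ring
  obtain ⟨hge, hle⟩ := sqrt_est hx0 hx1
  have hcx2 : c * (x^2/2) = Real.pi * ζ * (n:ℝ)^4 * ε^2 := by
    rw [hc_def, hx_def]; field_simp
  have habs2 : |θ₁ - θ₂| ≤ Real.pi * ζ * (n:ℝ)^4 * ε^2 := by
    rw [hdiff, abs_of_nonneg (by positivity)]
    nlinarith
  have hsmall : Real.pi * ζ * (n:ℝ)^4 * ε^2 ≤ 1 := by
    have h1 : (Real.pi*ζ*(n:ℝ)^4+1) * ε ≤ 1 := by
      rw [← le_div_iff₀' (by positivity)]; exact hε4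
    nlinarith [sq_nonneg ((n:ℝ)^2), mul_nonneg (mul_nonneg hπ.le hζ.le) (sq_nonneg ((n:ℝ)^2))]
  rw [hA, hB]
  calc ‖Complex.exp (θ₁ * Complex.I) - Complex.exp (θ₂ * Complex.I)‖
      ≤ 2 * |θ₁ - θ₂| := exp_I_sub_exp_I _ _ (le_trans habs2 hsmall)
    _ ≤ 2 * (Real.pi * ζ * (n:ℝ)^4 * ε^2) := by linarith

lemma pxAB_tendsto (ζ : ℝ) (hζ : 0 < ζ) (n : ℤ) :
    Tendsto (fun ε => ‖pxA ζ n ε - pxB ζ n ε‖) (nhdsWithin 0 (Set.Ioi 0)) (nhds 0) := by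
  have hπ : (0:ℝ) < Real.pi := Real.pi_pos
  have hbound : Tendsto (fun ε : ℝ => 2 * (Real.pi * ζ * (n:ℝ)^4 * ε^2))
      (nhdsWithin 0 (Set.Ioi 0)) (nhds 0) := by
    have hc : Continuous fun ε : ℝ => 2 * (Real.pi * ζ * (n:ℝ)^4 * ε^2) := by continuity
    have h0 := hc.tendsto 0
    simp only [mul_zero, ne_eq, OfNat.ofNat_ne_zero, not_false_eq_true, zero_pow] at h0
    simpa using h0.mono_left nhdsWithin_le_nhds
  apply squeeze_zero' (Filter.Eventually.of_forall fun ε => norm_nonneg _) ?_ hbound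
  set δ : ℝ := min 1 (min (1/((n:ℝ)^2+1)) (1/(Real.pi*ζ*(n:ℝ)^4+1))) with hδ_def
  have hδ : 0 < δ := by positivity
  filter_upwards [Ioo_mem_nhdsGT_of_mem (Set.mem_Ico.mpr ⟨le_refl (0:ℝ), hδ⟩)] with ε hε
  exact pxAB_bound ζ hζ n hε.1
    (le_trans hε.2.le (min_le_left _ _))
    (le_trans hε.2.le (le_trans (min_le_right _ _) (min_le_left _ _)))
    (le_trans hε.2.le (le_trans (min_le_right _ _) (min_le_right _ _)))

theorem paraxial_limit_L2 (g : ℤ → ℂ) (hg : Summable fun n : ℤ => ‖g n‖)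
    (ζ : ℝ) (hζ : 0 < ζ)
    (U UPar : ℝ → ℝ → ℂ)
    (hU : ∀ (ε ξ : ℝ), U ε ξ = ∑' n : ℤ,
      g n *
        (if |(n : ℝ)| * ε ≤ 1 then
          Complex.exp (-Complex.I * ((2 * Real.pi * ζ / ε ^ 2) *
            Real.sqrt (1 - ((n : ℝ) * ε) ^ 2)))
        else
          Complex.exp (-((2 * Real.pi * ζ / ε ^ 2) *
            Real.sqrt (((n : ℝ) * ε) ^ 2 - 1)) : ℝ)) *
        Complex.exp (2 * Real.pi * Complex.I * (n : ℂ) * ξ))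
    (hUPar : ∀ (ε ξ : ℝ), UPar ε ξ =
      Complex.exp (-(2 * Real.pi * ζ / ε ^ 2) * Complex.I) *
        ∑' n : ℤ, g n * Complex.exp (2 * Real.pi * Complex.I * (n : ℂ) * ξ +
          Complex.I * Real.pi * ζ * (n : ℂ) ^ 2)) :
    Tendsto (fun ε : ℝ => ∫ ξ in (0:ℝ)..1, ‖U ε ξ - UPar ε ξ‖ ^ 2)
      (nhdsWithin 0 (Set.Ioi 0)) (nhds 0) := by
  set e : ℤ → ℝ → ℂ := fun n ξ => Complex.exp (2 * Real.pi * Complex.I * (n : ℂ) * ξ)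
    with he_def
  have he : ∀ (n : ℤ) (ξ : ℝ), ‖e n ξ‖ = 1 := by
    intro n ξ
    have h1 : 2 * (Real.pi : ℂ) * Complex.I * (n : ℂ) * (ξ : ℂ) =
        ((2 * Real.pi * (n : ℝ) * ξ : ℝ) : ℂ) * Complex.I := by push_cast; ring
    rw [he_def]; simp only; rw [h1, Complex.norm_exp_ofReal_mul_I]
  have hBnorm : ∀ (n : ℤ) (ε : ℝ), ‖pxB ζ n ε‖ = 1 := fun n ε => norm_pxB_eq_one ζ n ε
  have hAnorm : ∀ (n : ℤ) (ε : ℝ), ‖pxA ζ n ε‖ ≤ 1 := fun n ε => norm_pxA_le_one ζ hζ.le n ε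
  have hABle : ∀ (n : ℤ) (ε : ℝ), ‖pxA ζ n ε - pxB ζ n ε‖ ≤ 2 := by
    intro n ε
    calc ‖pxA ζ n ε - pxB ζ n ε‖ ≤ ‖pxA ζ n ε‖ + ‖pxB ζ n ε‖ := norm_sub_le _ _
      _ ≤ 2 := by rw [hBnorm]; linarith [hAnorm n ε]
  set S : ℝ → ℝ := fun ε => ∑' n : ℤ, ‖g n‖ * ‖pxA ζ n ε - pxB ζ n ε‖ with hS_def
  have hSsum : ∀ ε : ℝ, Summable (fun n : ℤ => ‖g n‖ * ‖pxA ζ n ε - pxB ζ n ε‖) := by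
    intro ε
    apply Summable.of_nonneg_of_le (fun n => by positivity)
      (fun n => mul_le_mul_of_nonneg_left (hABle n ε) (norm_nonneg _)) (hg.mul_right 2)
  have hStend : Tendsto S (nhdsWithin 0 (Set.Ioi 0)) (nhds 0) := by
    have h := tendsto_tsum_of_dominated_convergence
      (f := fun (ε : ℝ) (n : ℤ) => ‖g n‖ * ‖pxA ζ n ε - pxB ζ n ε‖)
      (g := fun _ : ℤ => (0 : ℝ)) (bound := fun n : ℤ => ‖g n‖ * 2)
      (𝓕 := nhdsWithin 0 (Set.Ioi 0)) (hg.mul_right 2)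
      (fun n => by simpa using (pxAB_tendsto ζ hζ n).const_mul ‖g n‖)
      (Filter.Eventually.of_forall fun ε n => by
        rw [Real.norm_of_nonneg (by positivity)]
        exact mul_le_mul_of_nonneg_left (hABle n ε) (norm_nonneg _))
    simpa using h
  have hU' : ∀ ε ξ, U ε ξ = ∑' n : ℤ, g n * pxA ζ n ε * e n ξ := by
    intro ε ξ; rw [hU ε ξ]; rfl
  have hUPar' : ∀ ε ξ, UPar ε ξ = ∑' n : ℤ, g n * pxB ζ n ε * e n ξ := by
    intro ε ξ
    rw [hUPar ε ξ, ← tsum_mul_left]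
    refine tsum_congr fun n => ?_
    rw [Complex.exp_add]
    unfold pxB
    rw [Complex.exp_add]
    ring
  have hsumA : ∀ ε ξ, Summable (fun n : ℤ => g n * pxA ζ n ε * e n ξ) := by
    intro ε ξ
    apply Summable.of_norm
    apply Summable.of_nonneg_of_le (fun n => norm_nonneg _) ?_ hg
    intro n
    rw [norm_mul, norm_mul, he, mul_one]
    calc ‖g n‖ * ‖pxA ζ n ε‖ ≤ ‖g n‖ * 1 :=
          mul_le_mul_of_nonneg_left (hAnorm n ε) (norm_nonneg _)
      _ = ‖g n‖ := mul_one _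
  have hsumB : ∀ ε ξ, Summable (fun n : ℤ => g n * pxB ζ n ε * e n ξ) := by
    intro ε ξ
    apply Summable.of_norm
    apply Summable.of_nonneg_of_le (fun n => norm_nonneg _) ?_ hg
    intro n
    rw [norm_mul, norm_mul, he, mul_one, hBnorm, mul_one]
  have hptw : ∀ ε ξ, ‖U ε ξ - UPar ε ξ‖ ≤ S ε := by
    intro ε ξ
    rw [hU' ε ξ, hUPar' ε ξ, ← Summable.tsum_sub (hsumA ε ξ) (hsumB ε ξ)]
    have h1 : (∑' n : ℤ, (g n * pxA ζ n ε * e n ξ - g n * pxB ζ n ε * e n ξ)) =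
        ∑' n : ℤ, g n * (pxA ζ n ε - pxB ζ n ε) * e n ξ := tsum_congr fun n => by ring
    rw [h1]
    have h2 : ∀ n : ℤ, ‖g n * (pxA ζ n ε - pxB ζ n ε) * e n ξ‖ =
        ‖g n‖ * ‖pxA ζ n ε - pxB ζ n ε‖ := fun n => by
      rw [norm_mul, norm_mul, he, mul_one]
    calc ‖∑' n : ℤ, g n * (pxA ζ n ε - pxB ζ n ε) * e n ξ‖
        ≤ ∑' n : ℤ, ‖g n * (pxA ζ n ε - pxB ζ n ε) * e n ξ‖ :=
          norm_tsum_le_tsum_norm ((hSsum ε).congr fun n => (h2 n).symm)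
      _ = S ε := tsum_congr h2
  have hcontU : ∀ ε, Continuous (fun ξ => U ε ξ) := by
    intro ε
    have heq : (fun ξ => U ε ξ) = fun ξ => ∑' n : ℤ, g n * pxA ζ n ε * e n ξ :=
      funext (hU' ε)
    rw [heq]
    apply continuous_tsum ?_ hg ?_
    · intro n
      apply Continuous.mul continuous_const
      rw [he_def]; simp only
      exact Complex.continuous_exp.comp (by fun_prop)
    · intro n ξ
      rw [norm_mul, norm_mul, he, mul_one]
      calc ‖g n‖ * ‖pxA ζ n ε‖ ≤ ‖g n‖ * 1 :=
            mul_le_mul_of_nonneg_left (hAnorm n ε) (norm_nonneg _)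
        _ = ‖g n‖ := mul_one _
  have hcontUPar : ∀ ε, Continuous (fun ξ => UPar ε ξ) := by
    intro ε
    have heq : (fun ξ => UPar ε ξ) = fun ξ => ∑' n : ℤ, g n * pxB ζ n ε * e n ξ :=
      funext (hUPar' ε)
    rw [heq]
    apply continuous_tsum ?_ hg ?_
    · intro n
      apply Continuous.mul continuous_const
      rw [he_def]; simp only
      exact Complex.continuous_exp.comp (by fun_prop)
    · intro n ξ
      rw [norm_mul, norm_mul, he, mul_one, hBnorm, mul_one]
  have h0 : ∀ ε : ℝ, 0 ≤ ∫ ξ in (0:ℝ)..1, ‖U ε ξ - UPar ε ξ‖ ^ 2 := by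
    intro ε
    apply intervalIntegral.integral_nonneg (by norm_num)
    intro ξ _; positivity
  have hint : ∀ ε : ℝ, (∫ ξ in (0:ℝ)..1, ‖U ε ξ - UPar ε ξ‖ ^ 2) ≤ S ε ^ 2 := by
    intro ε
    have hc : Continuous fun ξ => ‖U ε ξ - UPar ε ξ‖ ^ 2 :=
      (((hcontU ε).sub (hcontUPar ε)).norm).pow 2
    have h1 : (∫ ξ in (0:ℝ)..1, ‖U ε ξ - UPar ε ξ‖ ^ 2) ≤ ∫ _ in (0:ℝ)..1, S ε ^ 2 := by
      apply intervalIntegral.integral_mono_on (by norm_num)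
        (hc.intervalIntegrable 0 1) intervalIntegrable_const
      intro ξ _
      have h2 := hptw ε ξ
      have h3 : (0:ℝ) ≤ ‖U ε ξ - UPar ε ξ‖ := norm_nonneg _
      nlinarith
    simpa using h1
  have hS2 : Tendsto (fun ε => S ε ^ 2) (nhdsWithin 0 (Set.Ioi 0)) (nhds 0) := by
    have := hStend.pow 2
    simpa using this
  exact tendsto_of_tendsto_of_tendsto_of_le_of_le tendsto_const_nhds hS2 h0 hint
end

section
/- Let (g_n)_{n∈ℤ} be a square-summable sequence of complex numbers and let ζ ∈ ℝ. For ε > 0 and integers n with |n| ≤ ⌊1/ε⌋ set θ_n(ε) := (2πζ/ε²)·(1 − √(1−(nε)²)) − πζn². Then lim_{ε→0⁺} Σ_{|n| ≤ ⌊1/ε⌋} |g_n|² · |exp(iθ_n(ε)) − 1|² = 0. -/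
open Filter Topology

theorem paraxial_phase_error_sum_limit (g : ℤ → ℂ)
    (hg : Summable fun n : ℤ => ‖g n‖ ^ 2) (ζ : ℝ) :
    Tendsto
      (fun ε : ℝ => ∑ n ∈ Finset.Icc (-⌊1 / ε⌋) ⌊1 / ε⌋,
        ‖g n‖ ^ 2 *
          ‖Complex.exp (Complex.I *
              ((2 * Real.pi * ζ / ε ^ 2) * (1 - Real.sqrt (1 - ((n : ℝ) * ε) ^ 2)) -
                Real.pi * ζ * (n : ℝ) ^ 2 : ℝ)) - 1‖ ^ 2)
      (nhdsWithin 0 (Set.Ioi 0)) (nhds 0) := by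
  set T : ℝ → ℤ → ℝ := fun ε n =>
    ‖g n‖ ^ 2 *
      ‖Complex.exp (Complex.I *
          ((2 * Real.pi * ζ / ε ^ 2) * (1 - Real.sqrt (1 - ((n : ℝ) * ε) ^ 2)) -
            Real.pi * ζ * (n : ℝ) ^ 2 : ℝ)) - 1‖ ^ 2 with hT
  set F : ℝ → ℤ → ℝ := fun ε n =>
    Set.indicator (↑(Finset.Icc (-⌊1 / ε⌋) ⌊1 / ε⌋) : Set ℤ) (T ε) n with hFdef
  have key : ∀ r : ℝ, ‖Complex.exp (Complex.I * (r : ℝ)) - 1‖ ≤ 2 := by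
    intro r
    calc ‖Complex.exp (Complex.I * (r : ℝ)) - 1‖
        ≤ ‖Complex.exp (Complex.I * (r : ℝ))‖ + ‖(1 : ℂ)‖ := norm_sub_le _ _
      _ ≤ 2 := by
          rw [mul_comm, Complex.norm_exp_ofReal_mul_I]
          norm_num
  have hTnn : ∀ ε n, 0 ≤ T ε n := by intro ε n; simp only [hT]; positivity
  have hTle : ∀ ε n, T ε n ≤ 4 * ‖g n‖ ^ 2 := by
    intro ε n
    simp only [hT]
    set c := ‖Complex.exp (Complex.I *
          ((2 * Real.pi * ζ / ε ^ 2) * (1 - Real.sqrt (1 - ((n : ℝ) * ε) ^ 2)) -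
            Real.pi * ζ * (n : ℝ) ^ 2 : ℝ)) - 1‖ with hc
    have h2 : c ≤ 2 := key _
    have h0 : 0 ≤ c := norm_nonneg _
    have hc2 : c ^ 2 ≤ 4 := by nlinarith
    nlinarith [sq_nonneg (‖g n‖)]
  have hsum_eq : ∀ ε : ℝ,
      (∑ n ∈ Finset.Icc (-⌊1 / ε⌋) ⌊1 / ε⌋, T ε n) = ∑' n, F ε n := by
    intro ε
    rw [tsum_eq_sum (s := Finset.Icc (-⌊1 / ε⌋) ⌊1 / ε⌋)
      (fun b hb => Set.indicator_of_notMem (by simpa using hb) _)]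
    exact Finset.sum_congr rfl fun n hn =>
      (Set.indicator_of_mem (by simpa using hn) _).symm
  have hbound : ∀ ε : ℝ, ∀ n : ℤ, ‖F ε n‖ ≤ 4 * ‖g n‖ ^ 2 := by
    intro ε n
    simp only [hFdef]
    rw [Real.norm_eq_abs, abs_of_nonneg (Set.indicator_nonneg (fun i _ => hTnn ε i) n)]
    exact Set.indicator_apply_le' (fun _ => hTle ε n) (fun _ => by positivity)
  have hpt : ∀ n : ℤ, Tendsto (fun ε => F ε n) (nhdsWithin 0 (Set.Ioi 0)) (nhds 0) := by
    intro n
    set G : ℝ → ℝ := fun ε =>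
      ‖g n‖ ^ 2 *
        ‖Complex.exp (Complex.I *
            ((2 * Real.pi * ζ * (n : ℝ) ^ 2 / (1 + Real.sqrt (1 - ((n : ℝ) * ε) ^ 2))) -
              Real.pi * ζ * (n : ℝ) ^ 2 : ℝ)) - 1‖ ^ 2 with hG
    have hN : (0 : ℝ) < (|n| : ℝ) + 1 := by positivity
    have hδ : (0 : ℝ) < 1 / ((|n| : ℝ) + 1) := by positivity
    have hmem : Set.Ioo (0:ℝ) (1 / ((|n| : ℝ) + 1)) ∈ nhdsWithin (0:ℝ) (Set.Ioi 0) :=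
      Ioo_mem_nhdsGT_of_mem ⟨le_refl _, hδ⟩
    have heq : (fun ε => G ε) =ᶠ[nhdsWithin (0:ℝ) (Set.Ioi 0)] fun ε => F ε n := by
      filter_upwards [hmem] with ε hε
      obtain ⟨hε0, hεu⟩ := hε
      have hεne : ε ≠ 0 := ne_of_gt hε0
      have hεN : ε * ((|n| : ℝ) + 1) < 1 := (lt_div_iff₀ hN).mp hεu
      have habs : |(n : ℝ)| * ε < 1 := by
        have : ((|n| : ℤ) : ℝ) = |(n : ℝ)| := by push_cast; ring
        nlinarith [abs_nonneg (n : ℝ), hε0.le, this ▸ hεN]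
      have hnn : ((n:ℝ) * ε) ^ 2 ≤ 1 := by
        have h0 : 0 ≤ |(n:ℝ)| * ε := mul_nonneg (abs_nonneg _) hε0.le
        have hsq : ((n:ℝ) * ε) ^ 2 = (|(n:ℝ)| * ε) ^ 2 := by
          rw [mul_pow, mul_pow, sq_abs]
        rw [hsq]; nlinarith
      have hin : n ∈ Finset.Icc (-⌊1 / ε⌋) ⌊1 / ε⌋ := by
        have hfl : (|n| : ℤ) ≤ ⌊1 / ε⌋ := by
          rw [Int.le_floor, le_div_iff₀ hε0]
          push_cast
          nlinarith [abs_nonneg (n : ℝ), hε0.le]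
        simp only [Finset.mem_Icc]
        exact ⟨by linarith [neg_abs_le n, neg_le_neg hfl], le_trans (le_abs_self n) hfl⟩
      have hFval : F ε n = T ε n := Set.indicator_of_mem (by simpa using hin) _
      have hs : Real.sqrt (1 - ((n : ℝ) * ε) ^ 2) ^ 2 = 1 - ((n : ℝ) * ε) ^ 2 :=
        Real.sq_sqrt (by linarith)
      have hsnn : 0 ≤ Real.sqrt (1 - ((n : ℝ) * ε) ^ 2) := Real.sqrt_nonneg _
      have h1s : (1 : ℝ) + Real.sqrt (1 - ((n : ℝ) * ε) ^ 2) ≠ 0 := by positivity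
      have h2 : 1 - Real.sqrt (1 - ((n : ℝ) * ε) ^ 2) =
          ((n:ℝ) * ε) ^ 2 / (1 + Real.sqrt (1 - ((n : ℝ) * ε) ^ 2)) := by
        rw [eq_div_iff h1s]; linear_combination -hs
      have hphase : (2 * Real.pi * ζ / ε ^ 2) * (1 - Real.sqrt (1 - ((n : ℝ) * ε) ^ 2)) =
          2 * Real.pi * ζ * (n : ℝ) ^ 2 / (1 + Real.sqrt (1 - ((n : ℝ) * ε) ^ 2)) := by
        rw [h2]; field_simp
      rw [hFval]
      simp only [hT, hG, hphase]
    refine Tendsto.congr' heq ?_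
    have hcont : ContinuousAt G 0 := by
      apply ContinuousAt.mul continuousAt_const
      apply ContinuousAt.pow
      apply ContinuousAt.norm
      apply ContinuousAt.sub _ continuousAt_const
      apply Complex.continuous_exp.continuousAt.comp
      apply ContinuousAt.mul continuousAt_const
      apply Complex.continuous_ofReal.continuousAt.comp
      apply ContinuousAt.sub _ continuousAt_const
      apply ContinuousAt.div continuousAt_const
      · exact continuousAt_const.add ((Real.continuous_sqrt.continuousAt).comp (by fun_prop))
      · have h1 : Real.sqrt (1 - ((n : ℝ) * (0:ℝ)) ^ 2) = 1 := by norm_num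
        simp only [h1]; norm_num
    have hG0 : G 0 = 0 := by
      simp only [hG]
      have h1 : Real.sqrt (1 - ((n : ℝ) * (0:ℝ)) ^ 2) = 1 := by norm_num
      rw [h1]
      have h3 : 2 * Real.pi * ζ * (n : ℝ) ^ 2 / (1 + 1) - Real.pi * ζ * (n : ℝ) ^ 2 = 0 := by
        ring
      rw [h3]
      simp
    have h4 : Tendsto G (nhdsWithin 0 (Set.Ioi 0)) (nhds (G 0)) :=
      hcont.continuousWithinAt (s := Set.Ioi 0)
    rw [hG0] at h4
    exact h4
  have hdom := tendsto_tsum_of_dominated_convergence (f := F) (g := fun _ => (0:ℝ))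
    (bound := fun n => 4 * ‖g n‖ ^ 2) (hg.mul_left 4) hpt (Eventually.of_forall hbound)
  rw [tsum_zero] at hdom
  exact hdom.congr fun ε => (hsum_eq ε).symm
end

section
/- Let ν and p be integers, q a positive integer, and set ζ₀ := ν + p/q. Then the function n ↦ exp(iπζ₀ n²) · exp(−iπ(ν+p) n) from ℤ to ℂ is periodic with period q. -/
theorem talbot_quadratic_phase_periodic (ν p : ℤ) (q : ℕ) (hq : 0 < q)
    (ζ₀ : ℝ) (hζ₀ : ζ₀ = (ν : ℝ) + (p : ℝ) / (q : ℝ)) (n : ℤ) :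
    Complex.exp (Real.pi * Complex.I * (ζ₀ : ℂ) * ((n + (q : ℤ) : ℤ) : ℂ) ^ 2) *
        Complex.exp (-(Real.pi * Complex.I * ((ν + p : ℤ) : ℂ) * ((n + (q : ℤ) : ℤ) : ℂ))) =
      Complex.exp (Real.pi * Complex.I * (ζ₀ : ℂ) * (n : ℂ) ^ 2) *
        Complex.exp (-(Real.pi * Complex.I * ((ν + p : ℤ) : ℂ) * (n : ℂ))) := by
  obtain ⟨m, hm⟩ := Int.even_mul_succ_self ((q : ℤ) - 1)
  have hq' : (q : ℂ) ≠ 0 := by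
    exact_mod_cast Nat.cast_ne_zero.mpr hq.ne'
  have h2 : ((q : ℂ) - 1) * q = 2 * (m : ℂ) := by
    have := congrArg (fun z : ℤ => (z : ℂ)) hm
    push_cast at this
    linear_combination this
  rw [← Complex.exp_add, ← Complex.exp_add, Complex.exp_eq_exp_iff_exists_int]
  refine ⟨ν * n * q + ν * m + p * n, ?_⟩
  subst hζ₀
  push_cast
  field_simp
  ring_nf
  linear_combination ((ν : ℂ) * (q : ℂ)) * h2
end

section
/- Let (g_n)_{n∈ℤ} be an absolutely summable sequence of complex numbers, let ν, p be integers, q a positive integer, and set ζ₀ := ν + p/q. Define c_r := (1/q) · Σ_{m=0}^{q−1} exp(iπζ₀ m² − iπ(ν+p) m − 2πi r m / q) for r = 0, …, q−1. Then for every real ξ: Σ_{n∈ℤ} g_n exp(2πi n ξ + iπζ₀ n²) = Σ_{r=0}^{q−1} c_r · Σ_{n∈ℤ} g_n exp(2πi n (ξ + r/q + (ν+p)/2)). -/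
lemma talbot_geom (q : ℕ) (hq : 0 < q) (d : ℤ) :
    ∑ r ∈ Finset.range q, Complex.exp (2 * Real.pi * Complex.I * (r : ℂ) * (d : ℂ) / (q : ℂ)) =
      if (q : ℤ) ∣ d then (q : ℂ) else 0 := by
  have hq' : (q : ℂ) ≠ 0 := Nat.cast_ne_zero.mpr hq.ne'
  have hpow : ∀ r : ℕ, Complex.exp (2 * Real.pi * Complex.I * (r : ℂ) * (d : ℂ) / (q : ℂ))
      = Complex.exp (2 * Real.pi * Complex.I * (d : ℂ) / (q : ℂ)) ^ r := by
    intro r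
    rw [← Complex.exp_nat_mul]
    congr 1
    ring
  simp_rw [hpow]
  by_cases hdvd : (q : ℤ) ∣ d
  · rw [if_pos hdvd]
    obtain ⟨e, he⟩ := hdvd
    have h1 : Complex.exp (2 * Real.pi * Complex.I * (d : ℂ) / (q : ℂ)) = 1 := by
      subst he
      push_cast
      rw [show (2 : ℂ) * Real.pi * Complex.I * ((q : ℂ) * e) / q = e * (2 * Real.pi * Complex.I) by
        field_simp]
      exact Complex.exp_int_mul_two_pi_mul_I e
    simp [h1]
  · have h1 : Complex.exp (2 * Real.pi * Complex.I * (d : ℂ) / (q : ℂ)) ≠ 1 := by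
      intro h
      rw [Complex.exp_eq_one_iff] at h
      obtain ⟨k, hk⟩ := h
      apply hdvd
      refine ⟨k, ?_⟩
      have h2 : (2 * Real.pi * Complex.I : ℂ) ≠ 0 := by
        simp [Real.pi_ne_zero, Complex.I_ne_zero]
      have hk' : (2 * Real.pi * Complex.I) * ((d : ℂ) / q) = (2 * Real.pi * Complex.I) * (k : ℂ) := by
        linear_combination hk
      have h4' := mul_left_cancel₀ h2 hk'
      have h3 : (d : ℂ) = (q : ℂ) * (k : ℂ) := by
        field_simp at h4'
        linear_combination h4'
      exact_mod_cast h3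
    rw [geom_sum_eq h1]
    have h4 : Complex.exp (2 * Real.pi * Complex.I * (d : ℂ) / (q : ℂ)) ^ q = 1 := by
      rw [← Complex.exp_nat_mul,
        show (q : ℂ) * (2 * Real.pi * Complex.I * (d : ℂ) / q) = d * (2 * Real.pi * Complex.I) by
          field_simp]
      exact Complex.exp_int_mul_two_pi_mul_I d
    rw [h4, if_neg hdvd]
    simp


lemma talbot_even (k m ν p q : ℤ) :
    Even (k * ((ν * q + p) * (k * q + 2 * m) - (ν + p) * q)) := by
  have h1 : Even ((q * k - 1) * (q * k)) := by
    simpa using Int.even_mul_succ_self (q * k - 1)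
  have h2 : Even ((k - 1) * k) := by
    simpa using Int.even_mul_succ_self (k - 1)
  have hN : k * ((ν * q + p) * (k * q + 2 * m) - (ν + p) * q)
      = 2 * (k * m * (ν * q + p)) + ν * ((q * k - 1) * (q * k)) + p * q * ((k - 1) * k) := by
    ring
  rw [hN]
  exact ((even_two_mul _).add (h1.mul_left ν)).add (h2.mul_left (p * q))

lemma talbot_key (ν p : ℤ) (q : ℕ) (hq : 0 < q) (ζ₀ : ℝ)
    (hζ₀ : ζ₀ = (ν : ℝ) + (p : ℝ) / (q : ℝ))
    (c : ℕ → ℂ)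
    (hc : ∀ r : ℕ, c r = (1 / (q : ℂ)) * ∑ m ∈ Finset.range q,
      Complex.exp (Real.pi * Complex.I * (ζ₀ : ℂ) * (m : ℂ) ^ 2 -
        Real.pi * Complex.I * ((ν + p : ℤ) : ℂ) * (m : ℂ) -
        2 * Real.pi * Complex.I * (r : ℂ) * (m : ℂ) / (q : ℂ)))
    (n : ℤ) :
    ∑ r ∈ Finset.range q, c r *
        Complex.exp (2 * Real.pi * Complex.I * (n : ℂ) *
          (((r : ℝ) / (q : ℝ) + ((ν : ℝ) + (p : ℝ)) / 2 : ℝ) : ℂ)) =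
      Complex.exp (Real.pi * Complex.I * (ζ₀ : ℂ) * (n : ℂ) ^ 2) := by
  have hqR : (q : ℝ) ≠ 0 := Nat.cast_ne_zero.mpr hq.ne'
  have hqC : (q : ℂ) ≠ 0 := Nat.cast_ne_zero.mpr hq.ne'
  set G : ℕ → ℂ := fun m => Real.pi * Complex.I * (ζ₀ : ℂ) * (m : ℂ) ^ 2 -
      Real.pi * Complex.I * ((ν + p : ℤ) : ℂ) * (m : ℂ) +
      Real.pi * Complex.I * ((ν + p : ℤ) : ℂ) * (n : ℂ) with hG
  have step1 : ∑ r ∈ Finset.range q, c r *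
        Complex.exp (2 * Real.pi * Complex.I * (n : ℂ) *
          (((r : ℝ) / (q : ℝ) + ((ν : ℝ) + (p : ℝ)) / 2 : ℝ) : ℂ)) =
      ∑ r ∈ Finset.range q, ∑ m ∈ Finset.range q, (1 / (q : ℂ)) *
        (Complex.exp (G m) *
          Complex.exp (2 * Real.pi * Complex.I * (r : ℂ) * ((n - (m : ℤ) : ℤ) : ℂ) / (q : ℂ))) := by
    refine Finset.sum_congr rfl fun r hr => ?_
    rw [hc, Finset.mul_sum, Finset.sum_mul]
    refine Finset.sum_congr rfl fun m hm => ?_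
    rw [mul_assoc, ← Complex.exp_add, ← Complex.exp_add]
    congr 2
    simp only [hG]
    push_cast
    field_simp
    push_cast
    ring
  rw [step1, Finset.sum_comm]
  have step2 : ∀ m ∈ Finset.range q, ∑ r ∈ Finset.range q, (1 / (q : ℂ)) *
        (Complex.exp (G m) *
          Complex.exp (2 * Real.pi * Complex.I * (r : ℂ) * ((n - (m : ℤ) : ℤ) : ℂ) / (q : ℂ))) =
      (1 / (q : ℂ)) * (Complex.exp (G m) *
        (if (q : ℤ) ∣ (n - (m : ℤ)) then (q : ℂ) else 0)) := by
    intro m hm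
    rw [← Finset.mul_sum, ← Finset.mul_sum, talbot_geom q hq]
  rw [Finset.sum_congr rfl step2]
  -- locate the unique residue
  set m₀ : ℕ := (n % (q : ℤ)).toNat with hm₀
  have hmod_nonneg : 0 ≤ n % (q : ℤ) := Int.emod_nonneg n (by exact_mod_cast hq.ne')
  have hmod_lt : n % (q : ℤ) < q := Int.emod_lt_of_pos n (by exact_mod_cast hq)
  have hm₀cast : (m₀ : ℤ) = n % (q : ℤ) := Int.toNat_of_nonneg hmod_nonneg
  have hm₀mem : m₀ ∈ Finset.range q := by
    rw [Finset.mem_range]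
    omega
  have hdvd₀ : (q : ℤ) ∣ (n - (m₀ : ℤ)) := by
    rw [hm₀cast]
    refine ⟨n / q, ?_⟩
    have h := Int.mul_ediv_add_emod n (q : ℤ)
    linarith
  rw [Finset.sum_eq_single_of_mem m₀ hm₀mem]
  · rw [if_pos hdvd₀]
    rw [show (1 / (q : ℂ)) * (Complex.exp (G m₀) * (q : ℂ)) = Complex.exp (G m₀) by
      field_simp]
    -- final exponent identity
    obtain ⟨t, ht⟩ := talbot_even (n / q) (n % q) ν p q
    have hGval : G m₀ = Real.pi * Complex.I * (ζ₀ : ℂ) * (n : ℂ) ^ 2 + ((-t : ℤ) : ℂ) * (2 * Real.pi * Complex.I) := by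
      simp only [hG]
      have hreal : ζ₀ * ((m₀ : ℝ)) ^ 2 - ((ν : ℝ) + (p : ℝ)) * (m₀ : ℝ) + ((ν : ℝ) + (p : ℝ)) * (n : ℝ)
          = ζ₀ * (n : ℝ) ^ 2 + ((-t : ℤ) : ℝ) * 2 := by
        have hζq : ζ₀ * (q : ℝ) = (ν : ℝ) * q + p := by
          rw [hζ₀]; field_simp
        have hm₀R : (m₀ : ℝ) = ((n % (q : ℤ) : ℤ) : ℝ) := by exact_mod_cast hm₀cast
        have hnR : (n : ℝ) = (q : ℝ) * ((n / (q : ℤ) : ℤ) : ℝ) + ((n % (q : ℤ) : ℤ) : ℝ) := by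
          exact_mod_cast congrArg (Int.cast : ℤ → ℝ) (Int.mul_ediv_add_emod n (q : ℤ)).symm
        have htR : ((n / (q : ℤ) : ℤ) : ℝ) * (((ν : ℝ) * q + p) * (((n / (q : ℤ) : ℤ) : ℝ) * q + 2 * ((n % (q : ℤ) : ℤ) : ℝ)) - ((ν : ℝ) + p) * q) = (t : ℝ) + (t : ℝ) := by
          exact_mod_cast congrArg (Int.cast : ℤ → ℝ) ht
        rw [hm₀R, hnR]
        push_cast
        linear_combination (-(((n / (q : ℤ) : ℤ) : ℝ) * ((q : ℝ) * ((n / (q : ℤ) : ℤ) : ℝ) + 2 * ((n % (q : ℤ) : ℤ) : ℝ)))) * hζq - htR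
      have := congrArg (Complex.ofReal) hreal
      push_cast at this ⊢
      linear_combination (Real.pi * Complex.I) * this
    rw [hGval, Complex.exp_add, Complex.exp_int_mul_two_pi_mul_I, mul_one]
  · intro b hb hbne
    rw [if_neg, mul_zero, mul_zero]
    intro hdvd
    apply hbne
    obtain ⟨e, he⟩ := hdvd
    have h1 : n % (q : ℤ) = (b : ℤ) % q := by
      have hnb : n = (b : ℤ) + (q : ℤ) * e := by linarith
      rw [hnb, Int.add_mul_emod_self_left]
    have h2 : (b : ℤ) % q = b := Int.emod_eq_of_lt (by positivity) (by exact_mod_cast Finset.mem_range.mp hb)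
    omega

theorem fractional_talbot_decomposition (g : ℤ → ℂ) (hg : Summable fun n : ℤ => ‖g n‖)
    (ν p : ℤ) (q : ℕ) (hq : 0 < q)
    (ζ₀ : ℝ) (hζ₀ : ζ₀ = (ν : ℝ) + (p : ℝ) / (q : ℝ))
    (c : ℕ → ℂ)
    (hc : ∀ r : ℕ, c r = (1 / (q : ℂ)) * ∑ m ∈ Finset.range q,
      Complex.exp (Real.pi * Complex.I * (ζ₀ : ℂ) * (m : ℂ) ^ 2 -
        Real.pi * Complex.I * ((ν + p : ℤ) : ℂ) * (m : ℂ) -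
        2 * Real.pi * Complex.I * (r : ℂ) * (m : ℂ) / (q : ℂ))) (ξ : ℝ) :
    ∑' n : ℤ, g n * Complex.exp (2 * Real.pi * Complex.I * (n : ℂ) * (ξ : ℂ) +
        Real.pi * Complex.I * (ζ₀ : ℂ) * (n : ℂ) ^ 2) =
      ∑ r ∈ Finset.range q, c r *
        ∑' n : ℤ, g n * Complex.exp (2 * Real.pi * Complex.I * (n : ℂ) *
          ((ξ + (r : ℝ) / (q : ℝ) + ((ν : ℝ) + (p : ℝ)) / 2 : ℝ) : ℂ)) := by
  have hsum : ∀ s : ℝ, Summable fun n : ℤ =>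
      g n * Complex.exp (2 * Real.pi * Complex.I * (n : ℂ) * (s : ℂ)) := by
    intro s
    apply Summable.of_norm
    have hnorm : ∀ n : ℤ, ‖g n * Complex.exp (2 * Real.pi * Complex.I * (n : ℂ) * (s : ℂ))‖
        = ‖g n‖ := by
      intro n
      rw [norm_mul, show (2 * (Real.pi : ℂ) * Complex.I * (n : ℂ) * (s : ℂ))
          = ((2 * Real.pi * (n : ℝ) * s : ℝ) : ℂ) * Complex.I by push_cast; ring]
      rw [Complex.norm_exp_ofReal_mul_I, mul_one]
    simpa only [hnorm] using hg
  have hpt : ∀ n : ℤ, g n * Complex.exp (2 * Real.pi * Complex.I * (n : ℂ) * (ξ : ℂ) +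
        Real.pi * Complex.I * (ζ₀ : ℂ) * (n : ℂ) ^ 2) =
      ∑ r ∈ Finset.range q, c r * (g n * Complex.exp (2 * Real.pi * Complex.I * (n : ℂ) *
          ((ξ + (r : ℝ) / (q : ℝ) + ((ν : ℝ) + (p : ℝ)) / 2 : ℝ) : ℂ))) := by
    intro n
    have hk := talbot_key ν p q hq ζ₀ hζ₀ c hc n
    rw [Complex.exp_add, ← hk, Finset.mul_sum, Finset.mul_sum]
    refine Finset.sum_congr rfl fun r hr => ?_
    have h1 : Complex.exp (2 * Real.pi * Complex.I * (n : ℂ) * (ξ : ℂ)) *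
        Complex.exp (2 * Real.pi * Complex.I * (n : ℂ) *
          (((r : ℝ) / (q : ℝ) + ((ν : ℝ) + (p : ℝ)) / 2 : ℝ) : ℂ)) =
        Complex.exp (2 * Real.pi * Complex.I * (n : ℂ) *
          ((ξ + (r : ℝ) / (q : ℝ) + ((ν : ℝ) + (p : ℝ)) / 2 : ℝ) : ℂ)) := by
      rw [← Complex.exp_add]
      congr 1
      push_cast
      ring
    rw [← h1]
    ring
  rw [tsum_congr hpt, Summable.tsum_finsetSum (fun r hr => (hsum _).mul_left (c r))]
  refine Finset.sum_congr rfl fun r hr => ?_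
  rw [tsum_mul_left]
end

section
/- Let p and q be coprime integers with q ≥ 1, and let ν, r be any integers. Then |(1/q) · Σ_{m=0}^{q−1} exp(iπ(ν + p/q) m² − iπ(ν+p) m − 2πi r m / q)| = 1/√q. -/
open Finset Complex

namespace TalbotAux

noncomputable def c (p : ℤ) (q : ℕ) (r : ℤ) (m : ℤ) : ℂ :=
  (Real.pi : ℂ) * Complex.I *
    ((p : ℂ) * (m : ℂ) ^ 2 - ((p : ℂ) * (q : ℂ) + 2 * (r : ℂ)) * (m : ℂ)) / (q : ℂ)

noncomputable def g (p : ℤ) (q : ℕ) (r : ℤ) (m : ℤ) : ℂ := Complex.exp (c p q r m)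

lemma g_periodic (p : ℤ) (q : ℕ) (hq : (q : ℂ) ≠ 0) (r : ℤ) (m k : ℤ) :
    g p q r (m + q * k) = g p q r m := by
  obtain ⟨t, ht⟩ : Even (k ^ 2 - k) := by
    have h := Int.even_mul_succ_self (k - 1)
    convert h using 1; ring
  have htc : (k : ℂ) ^ 2 - (k : ℂ) = (t : ℂ) + (t : ℂ) := by exact_mod_cast ht
  have key : c p q r (m + q * k) =
      c p q r m + ((p * m * k + p * q * t - r * k : ℤ) : ℂ) * (2 * Real.pi * Complex.I) := by
    unfold c
    push_cast
    field_simp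
    linear_combination (p : ℂ) * (q : ℂ) * (q : ℂ) * htc
  rw [g, g, key, Complex.exp_add, Complex.exp_int_mul_two_pi_mul_I, mul_one]

lemma sum_shift_one (p : ℤ) (q : ℕ) (hq : (q : ℂ) ≠ 0) (r : ℤ) (b : ℤ) :
    ∑ n ∈ range q, g p q r (b + 1 + n) = ∑ n ∈ range q, g p q r (b + n) := by
  have h1 : ∑ n ∈ range q, g p q r (b + 1 + n) = ∑ n ∈ range q, g p q r (b + (n + 1)) := by
    apply Finset.sum_congr rfl
    intro n _
    congr 1
    ring
  rw [h1]
  have h2 : ∑ n ∈ range (q + 1), g p q r (b + n)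
      = ∑ n ∈ range q, g p q r (b + (n + 1)) + g p q r (b + 0) :=
    Finset.sum_range_succ' _ _
  have h3 : ∑ n ∈ range (q + 1), g p q r (b + n)
      = ∑ n ∈ range q, g p q r (b + n) + g p q r (b + q) :=
    Finset.sum_range_succ _ _
  have h4 : g p q r (b + q) = g p q r (b + 0) := by
    have := g_periodic p q hq r b 1
    simpa using this
  rw [h4] at h3
  have := h2.symm.trans h3
  exact add_right_cancel this

lemma sum_shift (p : ℤ) (q : ℕ) (hq : (q : ℂ) ≠ 0) (r : ℤ) (a : ℤ) :
    ∑ n ∈ range q, g p q r (a + n) = ∑ n ∈ range q, g p q r n := by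
  induction a using Int.induction_on with
  | zero => simp
  | succ a ih => rw [sum_shift_one p q hq r a]; exact ih
  | pred a ih =>
      rw [← sum_shift_one p q hq r (-(a : ℤ) - 1)]
      rw [show (-(a : ℤ) - 1 + 1) = -(a : ℤ) by ring]
      exact ih

lemma conj_g (p : ℤ) (q : ℕ) (r : ℤ) (m : ℤ) :
    (starRingEnd ℂ) (g p q r m) = Complex.exp (-(c p q r m)) := by
  rw [g, ← Complex.exp_conj]
  congr 1
  unfold c
  simp [map_div₀, map_mul, map_sub, map_add, map_ofNat, Complex.conj_I, Complex.conj_ofReal]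
  ring

lemma c_cocycle (p : ℤ) (q : ℕ) (hq : (q : ℂ) ≠ 0) (r : ℤ) (m n : ℤ) :
    c p q r (m + n) = c p q r m + c p q r n
      + (m : ℂ) * (2 * (Real.pi : ℂ) * Complex.I * (p : ℂ) * (n : ℂ) / (q : ℂ)) := by
  unfold c
  push_cast
  field_simp
  ring

lemma sum_mul_conj (p : ℤ) (q : ℕ) (hq1 : 1 ≤ q) (hpq : Int.gcd p (q : ℤ) = 1) (r : ℤ) :
    (∑ m ∈ range q, g p q r m) * (starRingEnd ℂ) (∑ m ∈ range q, g p q r m) = (q : ℂ) := by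
  have hq : (q : ℂ) ≠ 0 := Nat.cast_ne_zero.mpr (by omega)
  set S := ∑ m ∈ range q, g p q r m with hS
  have hconjS : (starRingEnd ℂ) S = ∑ m ∈ range q, Complex.exp (-(c p q r m)) := by
    rw [hS, map_sum]
    exact Finset.sum_congr rfl fun m _ => conj_g p q r m
  rw [hconjS, Finset.mul_sum]
  have step1 : ∀ m ∈ range q, S * Complex.exp (-(c p q r m)) =
      ∑ n ∈ range q, Complex.exp (c p q r n) *
        Complex.exp (2 * (Real.pi : ℂ) * Complex.I * (p : ℂ) * (n : ℂ) / (q : ℂ)) ^ (m : ℕ) := by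
    intro m hm
    have hSm : S = ∑ n ∈ range q, g p q r (m + n) := (sum_shift p q hq r m).symm
    rw [hSm, Finset.sum_mul]
    apply Finset.sum_congr rfl
    intro n _
    rw [g, ← Complex.exp_add, c_cocycle p q hq r m n, ← Complex.exp_nat_mul,
      ← Complex.exp_add]
    congr 1
    push_cast
    ring
  rw [Finset.sum_congr rfl step1, Finset.sum_comm]
  have step2 : ∀ n ∈ range q,
      (∑ m ∈ range q, Complex.exp (c p q r n) *
        Complex.exp (2 * (Real.pi : ℂ) * Complex.I * (p : ℂ) * (n : ℂ) / (q : ℂ)) ^ m)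
      = if n = 0 then (q : ℂ) else 0 := by
    intro n hn
    rw [← Finset.mul_sum]
    by_cases h0 : n = 0
    · subst h0
      simp [c]
    · set ζ := Complex.exp (2 * (Real.pi : ℂ) * Complex.I * (p : ℂ) * (n : ℂ) / (q : ℂ)) with hζ
      have hn' : 0 < n ∧ n < q := ⟨Nat.pos_of_ne_zero h0, Finset.mem_range.mp hn⟩
      have hζne : ζ ≠ 1 := by
        intro hone
        obtain ⟨k, hk⟩ := Complex.exp_eq_one_iff.mp hone
        have hpi : (Real.pi : ℂ) ≠ 0 := Complex.ofReal_ne_zero.mpr Real.pi_ne_zero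
        have hcast : (p : ℂ) * (n : ℂ) = (k : ℂ) * (q : ℂ) := by
          field_simp at hk
          have hh : 2 * (Real.pi : ℂ) * Complex.I * ((p : ℂ) * (n : ℂ))
              = 2 * (Real.pi : ℂ) * Complex.I * ((k : ℂ) * (q : ℂ)) := by
            linear_combination 2 * (Real.pi : ℂ) * Complex.I * hk
          exact mul_left_cancel₀ (by simp [hpi, Complex.I_ne_zero]) hh
        have hint : p * (n : ℤ) = k * (q : ℤ) := by exact_mod_cast hcast
        have hdvd : (q : ℤ) ∣ p * (n : ℤ) := ⟨k, by linarith [hint]⟩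
        have hdvdn : (q : ℤ) ∣ (n : ℤ) := by
          apply Int.dvd_of_dvd_mul_right_of_gcd_one hdvd
          rw [Int.gcd_comm]; exact hpq
        have := Int.le_of_dvd (by exact_mod_cast hn'.1) hdvdn
        omega
      have hζq : ζ ^ q = 1 := by
        rw [hζ, ← Complex.exp_nat_mul]
        have : (q : ℂ) * (2 * (Real.pi : ℂ) * Complex.I * (p : ℂ) * (n : ℂ) / (q : ℂ))
            = ((p * n : ℤ) : ℂ) * (2 * (Real.pi : ℂ) * Complex.I) := by
          push_cast; field_simp
        rw [this, Complex.exp_int_mul_two_pi_mul_I]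
      rw [if_neg h0, geom_sum_eq hζne, hζq]
      simp
  rw [Finset.sum_congr rfl step2, Finset.sum_ite_eq' (range q) 0 (fun _ => (q : ℂ))]
  have h0q : (0 : ℕ) ∈ range q := Finset.mem_range.mpr (by omega)
  rw [if_pos h0q]

end TalbotAux

theorem talbot_coefficient_modulus (p : ℤ) (q : ℕ) (hq : 1 ≤ q)
    (hpq : Int.gcd p (q : ℤ) = 1) (ν r : ℤ) :
    ‖(1 / (q : ℂ)) * ∑ m ∈ Finset.range q,
        Complex.exp (Real.pi * Complex.I * ((ν : ℂ) + (p : ℂ) / (q : ℂ)) * (m : ℂ) ^ 2 -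
          Real.pi * Complex.I * ((ν + p : ℤ) : ℂ) * (m : ℂ) -
          2 * Real.pi * Complex.I * (r : ℂ) * (m : ℂ) / (q : ℂ))‖ =
      1 / Real.sqrt q := by
  have hq0 : (q : ℂ) ≠ 0 := Nat.cast_ne_zero.mpr (by omega)
  have hsummand : ∀ m ∈ Finset.range q,
      Complex.exp (Real.pi * Complex.I * ((ν : ℂ) + (p : ℂ) / (q : ℂ)) * (m : ℂ) ^ 2 -
          Real.pi * Complex.I * ((ν + p : ℤ) : ℂ) * (m : ℂ) -
          2 * Real.pi * Complex.I * (r : ℂ) * (m : ℂ) / (q : ℂ)) = TalbotAux.g p q r m := by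
    intro m _
    obtain ⟨t, ht⟩ : Even ((m : ℤ) ^ 2 - m) := by
      have h := Int.even_mul_succ_self ((m : ℤ) - 1)
      convert h using 1; ring
    have htc : ((m : ℕ) : ℂ) ^ 2 - ((m : ℕ) : ℂ) = (t : ℂ) + (t : ℂ) := by exact_mod_cast ht
    have key : (Real.pi : ℂ) * Complex.I * ((ν : ℂ) + (p : ℂ) / (q : ℂ)) * (m : ℂ) ^ 2 -
          Real.pi * Complex.I * ((ν + p : ℤ) : ℂ) * (m : ℂ) -
          2 * Real.pi * Complex.I * (r : ℂ) * (m : ℂ) / (q : ℂ)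
        = TalbotAux.c p q r m + ((ν * t : ℤ) : ℂ) * (2 * Real.pi * Complex.I) := by
      unfold TalbotAux.c
      push_cast
      push_cast at htc
      field_simp
      linear_combination (ν : ℂ) * (q : ℂ) * htc
    rw [key, TalbotAux.g, Complex.exp_add, Complex.exp_int_mul_two_pi_mul_I, mul_one]
  rw [Finset.sum_congr rfl hsummand]
  set S := ∑ m ∈ Finset.range q, TalbotAux.g p q r m with hS
  have hSq : S * (starRingEnd ℂ) S = (q : ℂ) := TalbotAux.sum_mul_conj p q hq hpq r
  have hnorm : Complex.normSq S = (q : ℝ) := by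
    have h := Complex.mul_conj S
    rw [hSq] at h
    exact_mod_cast h.symm
  have hqR : (0 : ℝ) < (q : ℝ) := by exact_mod_cast (by omega : 0 < q)
  rw [norm_mul, norm_div, norm_one, Complex.norm_natCast, Complex.norm_def, hnorm]
  have hs : (0 : ℝ) < Real.sqrt q := Real.sqrt_pos.mpr hqR
  rw [div_mul_eq_mul_div, one_mul, div_eq_div_iff (by positivity) (ne_of_gt hs), one_mul,
    Real.mul_self_sqrt hqR.le]
end

section
/- Let p and m be integers and q a positive integer with gcd(p,q) = 1. Then |Σ_{r=0}^{q−1} exp(iπ((pq + 2m) r − p r²)/q)| = √q. -/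
open Complex Finset

-- auxiliary: everything packaged inside one big lemma family
section Aux

variable (p m : ℤ) (q : ℕ)

noncomputable def gaussE (n : ℤ) : ℂ :=
  (Real.pi : ℂ) * Complex.I *
    (((p : ℂ) * (q : ℂ) + 2 * (m : ℂ)) * (n : ℂ) - (p : ℂ) * (n : ℂ) ^ 2) / (q : ℂ)

noncomputable def gaussPsi (n : ℤ) : ℂ := Complex.exp (gaussE p m q n)

lemma gaussPsi_conj (b : ℤ) :
    (starRingEnd ℂ) (gaussPsi p m q b) = Complex.exp (-(gaussE p m q b)) := by
  rw [gaussPsi, ← Complex.exp_conj]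
  congr 1
  simp only [gaussE, map_div₀, map_mul, map_sub, map_add, map_pow, Complex.conj_I,
    Complex.conj_ofReal, map_intCast, map_natCast, map_ofNat]
  ring

lemma gaussPsi_period (hq : 0 < q) (b : ℤ) :
    gaussPsi p m q (b + q) = gaussPsi p m q b := by
  have hq0 : (q : ℂ) ≠ 0 := Nat.cast_ne_zero.mpr hq.ne'
  have hEq : gaussE p m q (b + q) = gaussE p m q b + (m - p * b : ℤ) * (2 * Real.pi * Complex.I) := by
    simp only [gaussE]
    push_cast
    field_simp
    ring
  rw [gaussPsi, gaussPsi, hEq, Complex.exp_add, Complex.exp_int_mul_two_pi_mul_I, mul_one]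

lemma gaussPsi_shift (hq : 0 < q) (s : ℕ) :
    ∑ t ∈ range q, gaussPsi p m q (t + s) = ∑ r ∈ range q, gaussPsi p m q r := by
  induction s with
  | zero => simp
  | succ n ih =>
    have step : ∑ t ∈ range q, gaussPsi p m q ((t : ℤ) + (n + 1 : ℕ)) =
        ∑ t ∈ range q, gaussPsi p m q (((t + 1 : ℕ) : ℤ) + n) := by
      refine Finset.sum_congr rfl fun t _ => ?_
      congr 1
      push_cast
      ring
    rw [step]
    have h1 := Finset.sum_range_succ' (fun t : ℕ => gaussPsi p m q ((t : ℤ) + n)) q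
    have h2 := Finset.sum_range_succ (fun t : ℕ => gaussPsi p m q ((t : ℤ) + n)) q
    have h3 : gaussPsi p m q ((q : ℤ) + n) = gaussPsi p m q (((0:ℕ) : ℤ) + n) := by
      rw [add_comm ((q:ℤ)) (n:ℤ)]
      rw [gaussPsi_period p m q hq]
      simp
    have h4 := h1.symm.trans h2
    simp only [h3] at h4
    have h5 := add_right_cancel h4
    rw [h5, ih]

end Aux

theorem half_integer_gauss_sum_modulus (p m : ℤ) (q : ℕ) (hq : 0 < q)
    (hpq : Int.gcd p (q : ℤ) = 1) :
    ‖(∑ r ∈ Finset.range q,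
        Complex.exp (Real.pi * Complex.I *
          (((p : ℂ) * (q : ℂ) + 2 * (m : ℂ)) * (r : ℂ) - (p : ℂ) * (r : ℂ) ^ 2) / (q : ℂ)))‖ =
      Real.sqrt q := by
  have hq0 : (q : ℂ) ≠ 0 := Nat.cast_ne_zero.mpr hq.ne'
  set S := ∑ r ∈ Finset.range q,
      Complex.exp (Real.pi * Complex.I *
        (((p : ℂ) * (q : ℂ) + 2 * (m : ℂ)) * (r : ℂ) - (p : ℂ) * (r : ℂ) ^ 2) / (q : ℂ)) with hSdef
  have hSpsi : S = ∑ r ∈ range q, gaussPsi p m q r := by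
    refine Finset.sum_congr rfl fun r _ => ?_
    simp only [gaussPsi, gaussE]
    push_cast
    ring_nf
  -- the inner geometric-sum factor
  set A : ℕ → ℂ := fun t =>
    Complex.exp ((Real.pi : ℂ) * Complex.I * ((t : ℂ) * ((p : ℂ) * q + 2 * m - p * t)) / q) with hA
  set x : ℕ → ℂ := fun t => Complex.exp (-(2 * (Real.pi : ℂ) * Complex.I * p * t / q)) with hx
  have key : ∀ t s : ℕ, gaussPsi p m q ((t : ℤ) + s) * Complex.exp (-(gaussE p m q s)) =
      A t * x t ^ s := by
    intro t s
    rw [hA, hx, gaussPsi, ← Complex.exp_nat_mul, ← Complex.exp_add, ← Complex.exp_add]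
    congr 1
    simp only [gaussE]
    push_cast
    field_simp
    ring
  have hSS : S * (starRingEnd ℂ) S = (q : ℂ) := by
    rw [hSpsi, map_sum, Finset.sum_mul_sum]
    have : ∀ s ∈ range q, ∑ r ∈ range q, gaussPsi p m q r * (starRingEnd ℂ) (gaussPsi p m q s)
        = ∑ t ∈ range q, A t * x t ^ s := by
      intro s _
      rw [← Finset.sum_mul, ← gaussPsi_shift p m q hq s, Finset.sum_mul]
      refine Finset.sum_congr rfl fun t _ => ?_
      rw [gaussPsi_conj, key]
    rw [Finset.sum_comm, Finset.sum_congr rfl this, Finset.sum_comm]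
    have hgeom : ∀ t ∈ range q, A t * ∑ s ∈ range q, x t ^ s
        = if t = 0 then (q : ℂ) else 0 := by
      intro t ht
      rcases eq_or_ne t 0 with rfl | ht0
      · simp [hA, hx]
      · have htq : t < q := Finset.mem_range.mp ht
        have hx1 : x t ≠ 1 := by
          intro hx1
          rw [hx] at hx1
          rw [Complex.exp_eq_one_iff] at hx1
          obtain ⟨n, hn⟩ := hx1
          have h2pi : (2 : ℂ) * Real.pi * Complex.I ≠ 0 := by
            simp [Real.pi_ne_zero, Complex.I_ne_zero, Complex.ofReal_ne_zero]
          have hn' : (-(p : ℂ) * t / q) * (2 * Real.pi * Complex.I)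
              = (n : ℂ) * (2 * Real.pi * Complex.I) := by
            rw [← hn]; ring
          have hn2 : (-(p : ℂ) * t / q) = (n : ℂ) := mul_right_cancel₀ h2pi hn'
          have hn3 : (-(p : ℂ) * t) = (n : ℂ) * q := by
            field_simp at hn2
            linear_combination hn2
          have hn4 : -p * (t : ℤ) = n * q := by exact_mod_cast hn3
          have hdvd : (q : ℤ) ∣ p * t := ⟨-n, by linarith⟩
          have hcop : IsCoprime (q : ℤ) p := by
            rw [Int.isCoprime_iff_gcd_eq_one, Int.gcd_comm]
            exact hpq
          have hdvdt : (q : ℤ) ∣ (t : ℤ) := hcop.dvd_of_dvd_mul_left hdvd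
          have : q ∣ t := by exact_mod_cast hdvdt
          have := Nat.le_of_dvd (Nat.pos_of_ne_zero ht0) this
          omega
        have hxq : x t ^ q = 1 := by
          rw [hx, ← Complex.exp_nat_mul]
          have : (q : ℂ) * -(2 * (Real.pi : ℂ) * Complex.I * p * t / q)
              = ((-(p * t) : ℤ) : ℂ) * (2 * Real.pi * Complex.I) := by
            push_cast
            field_simp
          rw [this, Complex.exp_int_mul_two_pi_mul_I]
        rw [geom_sum_eq hx1, hxq]
        simp [ht0]
    simp only [← Finset.mul_sum]
    rw [Finset.sum_congr rfl hgeom, Finset.sum_ite_eq' (range q) 0 (fun _ => (q : ℂ))]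
    simp [Finset.mem_range.mpr hq]
  have hnormSq : Complex.normSq S = (q : ℝ) := by
    have := Complex.mul_conj S
    rw [hSS] at this
    exact_mod_cast this.symm
  rw [Complex.norm_def, hnormSq]
end

section
/- For integers p, r and a positive integer q with gcd(p,q) = 1, the generalized quadratic Gauss sum 𝔾(p,r,q) := Σ_{n=0}^{q−1} exp(2πi(p n² + r n)/q) satisfies: |𝔾(p,r,q)| = √q if q is odd; |𝔾(p,r,q)| = √(2q) if q is even and q ≡ 2r (mod 4); and |𝔾(p,r,q)| = 0 if q is even and q ≢ 2r (mod 4). -/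
open Finset Complex

lemma aux_sum (q : ℕ) [NeZero q] (a b : ℤ) :
    (∑ n ∈ Finset.range q,
        Complex.exp (2 * Real.pi * Complex.I * ((a : ℂ) * (n : ℂ) ^ 2 + (b : ℂ) * (n : ℂ)) / (q : ℂ)))
    = ∑ x : ZMod q, ZMod.stdAddChar ((a : ZMod q) * x ^ 2 + (b : ZMod q) * x) := by
  rw [Finset.sum_nbij' (i := fun (n : ℕ) => (n : ZMod q)) (j := fun (x : ZMod q) => x.val)]
  · intro n hn; exact Finset.mem_univ _
  · intro x hx; exact Finset.mem_range.2 (ZMod.val_lt x)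
  · intro n hn; exact (ZMod.val_natCast_of_lt (Finset.mem_range.1 hn)).symm ▸ rfl
  · intro x hx; exact ZMod.natCast_zmod_val x
  · intro n hn
    have : ((a : ZMod q) * (n : ZMod q) ^ 2 + (b : ZMod q) * (n : ZMod q))
        = (((a * n ^ 2 + b * n : ℤ) : ZMod q)) := by push_cast; ring
    rw [this, ZMod.stdAddChar_coe]
    push_cast
    ring_nf

lemma conj_aux (q : ℕ) (a b : ℤ) :
    (starRingEnd ℂ) (∑ n ∈ Finset.range q,
        Complex.exp (2 * Real.pi * Complex.I * ((a : ℂ) * (n : ℂ) ^ 2 + (b : ℂ) * (n : ℂ)) / (q : ℂ)))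
    = ∑ n ∈ Finset.range q,
        Complex.exp (2 * Real.pi * Complex.I * (((-a : ℤ) : ℂ) * (n : ℂ) ^ 2 + ((-b : ℤ) : ℂ) * (n : ℂ)) / (q : ℂ)) := by
  rw [map_sum]
  refine Finset.sum_congr rfl fun n _ => ?_
  rw [← Complex.exp_conj]
  congr 1
  simp only [map_div₀, map_mul, map_add, Complex.conj_I, map_ofNat, Complex.conj_ofReal,
    map_intCast, map_natCast, map_pow]
  push_cast
  ring

lemma key_sum (q : ℕ) [NeZero q] (p r : ℤ) (hp : IsUnit ((p : ZMod q))) :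
    (∑ x : ZMod q, ZMod.stdAddChar ((p : ZMod q) * x ^ 2 + (r : ZMod q) * x)) *
      (∑ y : ZMod q, ZMod.stdAddChar (((-p : ℤ) : ZMod q) * y ^ 2 + ((-r : ℤ) : ZMod q) * y)) =
    (q : ℂ) * ∑ h : ZMod q,
      if 2 * h = 0 then ZMod.stdAddChar ((p : ZMod q) * h ^ 2 + (r : ZMod q) * h) else 0 := by
  classical
  set ψ : AddChar (ZMod q) ℂ := ZMod.stdAddChar with hψ
  set P : ZMod q → ZMod q := fun x => (p : ZMod q) * x ^ 2 + (r : ZMod q) * x with hP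
  have hcast : ∀ y : ZMod q, ((-p : ℤ) : ZMod q) * y ^ 2 + ((-r : ℤ) : ZMod q) * y = -(P y) := by
    intro y; simp [hP]; ring
  calc (∑ x : ZMod q, ψ (P x)) * (∑ y : ZMod q, ψ (((-p:ℤ) : ZMod q) * y ^ 2 + ((-r:ℤ) : ZMod q) * y))
      = ∑ y : ZMod q, ∑ x : ZMod q, ψ (P x - P y) := by
        rw [Finset.sum_mul_sum, Finset.sum_comm]
        refine Finset.sum_congr rfl fun y _ => Finset.sum_congr rfl fun x _ => ?_
        rw [hcast, ← AddChar.map_add_eq_mul, sub_eq_add_neg]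
    _ = ∑ y : ZMod q, ∑ h : ZMod q, ψ (P h - P 0 + (2 * (p : ZMod q) * h) * y) := by
        refine Finset.sum_congr rfl fun y _ => ?_
        refine Fintype.sum_equiv (Equiv.subRight y) _ _ fun h => ?_
        congr 1
        simp only [Equiv.subRight_apply, hP]
        ring
    _ = ∑ h : ZMod q, ψ (P h) * ∑ y : ZMod q, ψ (y * (2 * (p : ZMod q) * h)) := by
        rw [Finset.sum_comm]
        refine Finset.sum_congr rfl fun h _ => ?_
        rw [Finset.mul_sum]
        refine Finset.sum_congr rfl fun y _ => ?_
        rw [← AddChar.map_add_eq_mul]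
        congr 1
        simp only [hP]
        ring
    _ = ∑ h : ZMod q, ψ (P h) * (if 2 * (p : ZMod q) * h = 0 then (Fintype.card (ZMod q) : ℂ) else 0) := by
        refine Finset.sum_congr rfl fun h _ => ?_
        rw [AddChar.sum_mulShift _ (ZMod.isPrimitive_stdAddChar q)]
        push_cast
        ring_nf
    _ = (q : ℂ) * ∑ h : ZMod q,
          if 2 * h = 0 then ψ ((p : ZMod q) * h ^ 2 + (r : ZMod q) * h) else 0 := by
        rw [Finset.mul_sum]
        refine Finset.sum_congr rfl fun h _ => ?_
        have hiff : 2 * (p : ZMod q) * h = 0 ↔ 2 * h = 0 := by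
          rw [mul_comm 2 ((p : ZMod q)), mul_assoc]
          exact hp.mul_right_eq_zero
        rw [ZMod.card]
        by_cases h2 : 2 * h = 0
        · rw [if_pos (hiff.2 h2), if_pos h2]; ring
        · rw [if_neg (fun hc => h2 (hiff.1 hc)), if_neg h2]; ring

lemma even_sum (q : ℕ) [NeZero q] (p r : ℤ) (s : ℕ) (hs : q = s + s) (hq : 0 < q) :
    (∑ h : ZMod q,
        if 2 * h = 0 then ZMod.stdAddChar ((p : ZMod q) * h ^ 2 + (r : ZMod q) * h) else 0)
      = 1 + (-1 : ℂ) ^ (p * (s : ℤ) + r) := by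
  classical
  set σ : ZMod q := ((s : ℕ) : ZMod q) with hσ
  have hs0 : s ≠ 0 := by omega
  have hchar : ∀ h : ZMod q, (2 * h = 0) = (h = 0 ∨ h = σ) := by
    intro h
    simp only [eq_iff_iff]
    constructor
    · intro hh
      have h1 : ((2 * h.val : ℕ) : ZMod q) = 0 := by
        push_cast [ZMod.natCast_zmod_val]
        exact hh
      rw [ZMod.natCast_eq_zero_iff] at h1
      have hlt := ZMod.val_lt h
      obtain ⟨k, hk⟩ := h1
      have hv : h.val = 0 ∨ h.val = s := by
        rcases Nat.lt_or_ge k 2 with hk2 | hk2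
        · interval_cases k <;> omega
        · exfalso; nlinarith [hk, hlt]
      rcases hv with hv | hv
      · left; rw [← ZMod.natCast_zmod_val h, hv]; simp
      · right; rw [← ZMod.natCast_zmod_val h, hv]
    · rintro (rfl | rfl)
      · simp
      · have h2 : (2 : ZMod q) * σ = ((2 * s : ℕ) : ZMod q) := by rw [hσ]; push_cast; ring
        rw [h2, show 2 * s = q by omega, ZMod.natCast_self]
  have hne : (0 : ZMod q) ≠ σ := by
    intro h0
    have hd := (ZMod.natCast_eq_zero_iff s q).mp h0.symm
    have := Nat.le_of_dvd (by omega) hd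
    omega
  simp_rw [hchar]
  have hmem : ∀ h : ZMod q, (h = 0 ∨ h = σ) = (h ∈ ({0, σ} : Finset (ZMod q))) := by
    intro h; simp [Finset.mem_insert, Finset.mem_singleton]
  simp_rw [hmem]
  rw [Finset.sum_ite_mem, Finset.univ_inter, Finset.sum_pair hne]
  congr 1
  · simp
  · have hcast : (p : ZMod q) * σ ^ 2 + (r : ZMod q) * σ
        = (((p * (s : ℤ) ^ 2 + r * (s : ℤ) : ℤ)) : ZMod q) := by rw [hσ]; push_cast; ring
    rw [hcast, ZMod.stdAddChar_coe]
    have harg : (2 * (Real.pi : ℂ) * Complex.I * ((p * (s : ℤ) ^ 2 + r * (s : ℤ) : ℤ) : ℂ) / (q : ℂ))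
        = ((p * (s : ℤ) + r : ℤ) : ℂ) * ((Real.pi : ℂ) * Complex.I) := by
      have hqc : (q : ℂ) = 2 * (s : ℂ) := by rw [hs]; push_cast; ring
      have hsne : (s : ℂ) ≠ 0 := Nat.cast_ne_zero.2 hs0
      rw [hqc]
      field_simp
      push_cast; ring
    rw [harg, Complex.exp_int_mul, Complex.exp_pi_mul_I]

theorem generalized_quadratic_gauss_sum_modulus (p r : ℤ) (q : ℕ) (hq : 0 < q)
    (hpq : Int.gcd p (q : ℤ) = 1) :
    (Odd q →
      ‖∑ n ∈ Finset.range q,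
          Complex.exp (2 * Real.pi * Complex.I * ((p : ℂ) * (n : ℂ) ^ 2 + (r : ℂ) * (n : ℂ)) / (q : ℂ))‖ =
        Real.sqrt q) ∧
    (Even q → (q : ℤ) ≡ 2 * r [ZMOD 4] →
      ‖∑ n ∈ Finset.range q,
          Complex.exp (2 * Real.pi * Complex.I * ((p : ℂ) * (n : ℂ) ^ 2 + (r : ℂ) * (n : ℂ)) / (q : ℂ))‖ =
        Real.sqrt (2 * q)) ∧
    (Even q → ¬ (q : ℤ) ≡ 2 * r [ZMOD 4] →
      ‖∑ n ∈ Finset.range q,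
          Complex.exp (2 * Real.pi * Complex.I * ((p : ℂ) * (n : ℂ) ^ 2 + (r : ℂ) * (n : ℂ)) / (q : ℂ))‖ =
        0) := by
  classical
  haveI : NeZero q := ⟨hq.ne'⟩
  set G := ∑ n ∈ Finset.range q,
      Complex.exp (2 * Real.pi * Complex.I * ((p : ℂ) * (n : ℂ) ^ 2 + (r : ℂ) * (n : ℂ)) / (q : ℂ)) with hGdef
  -- p is a unit mod q
  have hpu : IsUnit ((p : ZMod q)) := by
    have h1 : IsCoprime (p : ℤ) ((q : ℕ) : ℤ) := Int.isCoprime_iff_gcd_eq_one.2 hpq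
    have h2 := h1.map (Int.castRingHom (ZMod q))
    rw [show ((Int.castRingHom (ZMod q)) ((q : ℕ) : ℤ)) = 0 by
      simp [ZMod.natCast_self]] at h2
    have h3 : IsUnit ((Int.castRingHom (ZMod q)) p) := isCoprime_zero_right.mp h2
    simpa using h3
  have hns : ((Complex.normSq G : ℂ)) = (q : ℂ) * ∑ h : ZMod q,
      if 2 * h = 0 then ZMod.stdAddChar ((p : ZMod q) * h ^ 2 + (r : ZMod q) * h) else 0 := by
    rw [← Complex.mul_conj, hGdef, conj_aux, aux_sum q p r, aux_sum q (-p) (-r)]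
    exact key_sum q p r hpu
  refine ⟨?_, ?_, ?_⟩
  · -- odd case
    intro hodd
    have h2u : IsUnit (2 : ZMod q) := by
      have : ((2 : ℕ) : ZMod q) = (2 : ZMod q) := by push_cast; rfl
      rw [← this, ZMod.isUnit_iff_coprime]
      exact Nat.coprime_two_left.mpr hodd
    have hsum : (∑ h : ZMod q,
        if 2 * h = 0 then ZMod.stdAddChar ((p : ZMod q) * h ^ 2 + (r : ZMod q) * h) else 0) = 1 := by
      have heq : ∀ h : ZMod q, (2 * h = 0) = (h = 0) := by
        intro h
        simp only [eq_iff_iff]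
        constructor
        · exact fun hh => h2u.mul_right_eq_zero.mp hh
        · rintro rfl; simp
      simp_rw [heq]
      rw [Finset.sum_ite_eq' Finset.univ (0 : ZMod q)]
      simp
    rw [hsum, mul_one] at hns
    have hns' : Complex.normSq G = (q : ℝ) := by exact_mod_cast hns
    rw [Complex.norm_def, hns']
  · -- even, congruent case
    intro heven hcond
    obtain ⟨s, hs⟩ := heven
    have hpodd : Odd p := by
      rcases Int.even_or_odd p with he | ho
      · exfalso
        have hdp : (2 : ℤ) ∣ p := he.two_dvd
        have hdq : (2 : ℤ) ∣ (q : ℤ) := by rw [hs]; push_cast; exact ⟨(s:ℤ), by ring⟩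
        have hd := Int.dvd_gcd hdp hdq
        rw [hpq] at hd
        norm_num at hd
      · exact ho
    obtain ⟨t, ht⟩ := hpodd
    have hkiff : Even (p * (s : ℤ) + r) ↔ (q : ℤ) ≡ 2 * r [ZMOD 4] := by
      have hlin : p * (s : ℤ) + r = 2 * (t * (s : ℤ)) + (s : ℤ) + r := by rw [ht]; ring
      have hqz : (q : ℤ) = (s : ℤ) + (s : ℤ) := by rw [hs]; push_cast; ring
      rw [Int.modEq_iff_dvd, Int.even_iff, hlin, hqz]
      generalize t * (s : ℤ) = u
      omega
    rw [even_sum q p r s hs hq, Even.neg_one_zpow (hkiff.mpr hcond)] at hns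
    have hns' : Complex.normSq G = 2 * (q : ℝ) := by
      have h2 : ((Complex.normSq G : ℂ)) = ((2 * (q : ℝ) : ℝ) : ℂ) := by
        rw [hns]; push_cast; ring
      exact_mod_cast h2
    rw [Complex.norm_def, hns']
  · -- even, non-congruent case
    intro heven hcond
    obtain ⟨s, hs⟩ := heven
    have hpodd : Odd p := by
      rcases Int.even_or_odd p with he | ho
      · exfalso
        have hdp : (2 : ℤ) ∣ p := he.two_dvd
        have hdq : (2 : ℤ) ∣ (q : ℤ) := by rw [hs]; push_cast; exact ⟨(s:ℤ), by ring⟩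
        have hd := Int.dvd_gcd hdp hdq
        rw [hpq] at hd
        norm_num at hd
      · exact ho
    obtain ⟨t, ht⟩ := hpodd
    have hkiff : Even (p * (s : ℤ) + r) ↔ (q : ℤ) ≡ 2 * r [ZMOD 4] := by
      have hlin : p * (s : ℤ) + r = 2 * (t * (s : ℤ)) + (s : ℤ) + r := by rw [ht]; ring
      have hqz : (q : ℤ) = (s : ℤ) + (s : ℤ) := by rw [hs]; push_cast; ring
      rw [Int.modEq_iff_dvd, Int.even_iff, hlin, hqz]
      generalize t * (s : ℤ) = u
      omega
    have hodd' : Odd (p * (s : ℤ) + r) :=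
      Int.not_even_iff_odd.1 fun he => hcond (hkiff.mp he)
    rw [even_sum q p r s hs hq, Odd.neg_one_zpow hodd'] at hns
    have hns' : Complex.normSq G = 0 := by
      have h2 : ((Complex.normSq G : ℂ)) = ((0 : ℝ) : ℂ) := by rw [hns]; push_cast; ring
      exact_mod_cast h2
    rw [Complex.norm_def, hns', Real.sqrt_zero]
end

section
/- For integers p, r and an odd positive integer q with gcd(p,q) = 1, the generalized quadratic Gauss sum 𝔾(p,r,q) := Σ_{n=0}^{q−1} exp(2πi(p n² + r n)/q) satisfies |𝔾(p,r,q)|² = q. -/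
open Finset Complex ZMod

theorem gauss_sum_odd_modulus_sq (p r : ℤ) (q : ℕ) (hq : 0 < q) (hqo : Odd q)
    (hpq : Int.gcd p (q : ℤ) = 1) :
    ‖(∑ n ∈ Finset.range q,
        Complex.exp (2 * Real.pi * Complex.I * ((p : ℂ) * (n : ℂ) ^ 2 + (r : ℂ) * (n : ℂ)) / (q : ℂ)))‖ ^ 2 =
      q := by
  haveI : NeZero q := ⟨hq.ne'⟩
  classical
  set ψ : AddChar (ZMod q) ℂ := ZMod.stdAddChar with hψdef
  set P : ZMod q := (p : ZMod q) with hP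
  set R : ZMod q := (r : ZMod q) with hR
  -- step 1 : rewrite as character sum
  have hterm : ∀ n : ℕ, Complex.exp (2 * Real.pi * Complex.I * ((p : ℂ) * (n : ℂ) ^ 2 + (r : ℂ) * (n : ℂ)) / (q : ℂ))
      = ψ (P * (n : ZMod q) ^ 2 + R * (n : ZMod q)) := by
    intro n
    have h1 : P * (n : ZMod q) ^ 2 + R * (n : ZMod q) = ((p * n ^ 2 + r * n : ℤ) : ZMod q) := by
      push_cast [hP, hR]; ring
    rw [h1, hψdef, ZMod.stdAddChar_coe]
    congr 1
    push_cast
    ring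
  have hG : (∑ n ∈ Finset.range q,
        Complex.exp (2 * Real.pi * Complex.I * ((p : ℂ) * (n : ℂ) ^ 2 + (r : ℂ) * (n : ℂ)) / (q : ℂ)))
      = ∑ x : ZMod q, ψ (P * x ^ 2 + R * x) :=
    calc (∑ n ∈ Finset.range q,
        Complex.exp (2 * Real.pi * Complex.I * ((p : ℂ) * (n : ℂ) ^ 2 + (r : ℂ) * (n : ℂ)) / (q : ℂ)))
        = ∑ n ∈ Finset.range q, ψ (P * (n : ZMod q) ^ 2 + R * (n : ZMod q)) :=
          Finset.sum_congr rfl fun n _ => hterm n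
      _ = ∑ x : ZMod q, ψ (P * x ^ 2 + R * x) :=
          Finset.sum_bij' (fun (n : ℕ) _ => (n : ZMod q)) (fun (x : ZMod q) _ => x.val)
            (fun n _ => Finset.mem_univ _)
            (fun x _ => Finset.mem_range.mpr (ZMod.val_lt x))
            (fun n hn => ZMod.val_natCast_of_lt (Finset.mem_range.mp hn))
            (fun x _ => ZMod.natCast_zmod_val x)
            (fun n _ => rfl)
  rw [hG]
  set S : ℂ := ∑ x : ZMod q, ψ (P * x ^ 2 + R * x) with hS
  -- conj of ψ
  have hconj : ∀ a : ZMod q, (starRingEnd ℂ) (ψ a) = ψ (-a) := by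
    intro a
    have h1 : ψ a * ψ (-a) = 1 := by rw [← AddChar.map_add_eq_mul]; simp
    have h2 : ‖ψ a‖ = 1 := by
      rw [hψdef, ZMod.stdAddChar_apply]; exact Circle.norm_coe _
    rw [← Complex.inv_eq_conj h2]
    exact (eq_inv_of_mul_eq_one_left (by rwa [mul_comm] at h1)).symm
  -- units
  have hu2 : IsUnit (2 : ZMod q) := by
    have := (ZMod.isUnit_iff_coprime 2 q).mpr (Nat.coprime_two_left.mpr hqo)
    simpa using this
  have huP : IsUnit P := by
    obtain ⟨u, v, huv⟩ := Int.isCoprime_iff_gcd_eq_one.mpr hpq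
    refine IsUnit.of_mul_eq_one (a := P) (u : ZMod q) ?_
    have := congrArg (fun z : ℤ => (z : ZMod q)) huv
    push_cast at this
    rw [ZMod.natCast_self] at this
    rw [mul_comm]
    simpa using this
  have hu2P : IsUnit (2 * P) := hu2.mul huP
  -- key computation
  have key : S * (starRingEnd ℂ) S = q := by
    rw [hS, map_sum, Finset.mul_sum]
    calc (∑ y : ZMod q, (∑ x : ZMod q, ψ (P * x ^ 2 + R * x)) * (starRingEnd ℂ) (ψ (P * y ^ 2 + R * y)))
        = ∑ y : ZMod q, ∑ h : ZMod q, ψ (P * h ^ 2 + R * h) * ψ (y * (2 * P * h)) := by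
          refine Finset.sum_congr rfl fun y _ => ?_
          rw [hconj, Finset.sum_mul]
          refine (Fintype.sum_equiv (Equiv.addLeft y) _ _ fun h => ?_).symm
          simp only [Equiv.coe_addLeft]
          rw [← AddChar.map_add_eq_mul, ← AddChar.map_add_eq_mul]
          congr 1
          ring
      _ = ∑ h : ZMod q, ψ (P * h ^ 2 + R * h) * ∑ y : ZMod q, ψ (y * (2 * P * h)) := by
          rw [Finset.sum_comm]
          exact Finset.sum_congr rfl fun h _ => (Finset.mul_sum _ _ _).symm
      _ = ∑ h : ZMod q, ψ (P * h ^ 2 + R * h) * (if 2 * P * h = 0 then (Fintype.card (ZMod q) : ℂ) else 0) := by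
          refine Finset.sum_congr rfl fun h _ => ?_
          rw [AddChar.sum_mulShift _ (ZMod.isPrimitive_stdAddChar q)]
          split_ifs <;> simp
      _ = ∑ h : ZMod q, (if h = 0 then ψ (P * h ^ 2 + R * h) * (q : ℂ) else 0) := by
          refine Finset.sum_congr rfl fun h _ => ?_
          have : 2 * P * h = 0 ↔ h = 0 := by
            rw [hu2P.mul_right_eq_zero]
          simp only [this, ZMod.card, mul_ite, mul_zero]
      _ = (q : ℂ) := by
          rw [Finset.sum_ite_eq' Finset.univ (0 : ZMod q)]
          simp
  -- conclude
  have h1 : (Complex.normSq S : ℂ) = (q : ℂ) := by rw [← Complex.mul_conj]; exact key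
  have h2 : Complex.normSq S = q := by exact_mod_cast h1
  rw [Complex.sq_norm, h2]
end

section
/- Let p, r be integers and q an even positive integer with gcd(p,q) = 1. Then the generalized quadratic Gauss sum 𝔾(p,r,q) := Σ_{n=0}^{q−1} exp(2πi(p n² + r n)/q) satisfies |𝔾(p,r,q)|² = q · (1 + (−1)^{pq/2 + r}). -/
open Finset Complex

private lemma sum_range_eq_sum_zmod {q : ℕ} [NeZero q] (f : ZMod q → ℂ) :
    ∑ n ∈ Finset.range q, f (n : ZMod q) = ∑ x : ZMod q, f x := by
  rw [← Fin.sum_univ_eq_sum_range (fun n => f (n : ZMod q)) q]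
  have hb : Function.Bijective (fun i : Fin q => ((i : ℕ) : ZMod q)) := by
    rw [Fintype.bijective_iff_injective_and_card]
    refine ⟨fun i j h => ?_, by simp [ZMod.card]⟩
    have := congrArg ZMod.val h
    rwa [ZMod.val_cast_of_lt i.2, ZMod.val_cast_of_lt j.2, ← Fin.ext_iff] at this
  exact Fintype.sum_bijective _ hb (fun i : Fin q => f ((i : ℕ) : ZMod q)) f (fun i => rfl)

theorem gauss_sum_even_modulus_sq (p r : ℤ) (q : ℕ) (hq : 0 < q) (hqe : Even q)
    (hpq : Int.gcd p (q : ℤ) = 1) :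
    ‖(∑ n ∈ Finset.range q,
        Complex.exp (2 * Real.pi * Complex.I * ((p : ℂ) * (n : ℂ) ^ 2 + (r : ℂ) * (n : ℂ)) / (q : ℂ)))‖ ^ 2 =
      (q : ℝ) * (1 + (-1 : ℝ) ^ (p * (q : ℤ) / 2 + r)) := by
  haveI : NeZero q := ⟨hq.ne'⟩
  set ψ := ZMod.stdAddChar (N := q) with hψdef
  set f : ZMod q → ZMod q := fun x => (p : ZMod q) * x ^ 2 + (r : ZMod q) * x with hf
  set S : ℂ := ∑ n ∈ Finset.range q,
      Complex.exp (2 * Real.pi * Complex.I * ((p : ℂ) * (n : ℂ) ^ 2 + (r : ℂ) * (n : ℂ)) / (q : ℂ)) with hS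
  -- Step 1: rewrite S as a character sum over ZMod q
  have hS' : S = ∑ x : ZMod q, ψ (f x) := by
    rw [hS, ← sum_range_eq_sum_zmod (fun x => ψ (f x))]
    refine Finset.sum_congr rfl fun n _ => ?_
    have h1 : f ((n : ℕ) : ZMod q) = ((p * (n : ℤ) ^ 2 + r * (n : ℤ) : ℤ) : ZMod q) := by
      push_cast [hf]; ring
    rw [h1, ZMod.stdAddChar_coe]
    push_cast
    ring_nf
  -- conjugation of the character
  have hconj : ∀ a : ZMod q, (starRingEnd ℂ) (ψ a) = ψ (-a) := by
    intro a
    have h0 : 0 < ringChar (ZMod q) := by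
      rw [ZMod.ringChar_zmod_n]; exact hq
    rw [AddChar.starComp_apply h0, AddChar.inv_apply]
  -- m = q/2 as element of ZMod q
  set t : ℕ := q / 2 with ht
  have hq2t : q = 2 * t := by
    rw [ht]; exact (Nat.two_mul_div_two_of_even hqe).symm
  set m : ZMod q := ((t : ℕ) : ZMod q) with hm
  have hm_ne : m ≠ 0 := by
    rw [hm, Ne, ZMod.natCast_eq_zero_iff]
    intro hdvd
    have ht0 : 0 < t := by omega
    exact absurd (Nat.le_of_dvd ht0 hdvd) (by omega)
  -- solutions of 2*p*h = 0
  have hpu : IsUnit (p : ZMod q) := by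
    obtain ⟨u, v, huv⟩ := Int.isCoprime_iff_gcd_eq_one.mpr hpq
    have hcast := congrArg (Int.cast : ℤ → ZMod q) huv
    push_cast at hcast
    rw [ZMod.natCast_self, mul_zero, add_zero] at hcast
    exact IsUnit.of_mul_eq_one _ (by rw [mul_comm]; exact hcast)
  have hsol : ∀ h : ZMod q, ((2 : ZMod q) * (p : ZMod q) * h = 0) ↔ (h = 0 ∨ h = m) := by
    intro h
    constructor
    · intro hh
      have h2h : (2 : ZMod q) * h = 0 := by
        have : (p : ZMod q) * ((2 : ZMod q) * h) = 0 := by rw [← hh]; ring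
        exact (hpu.mul_right_eq_zero).mp this
      have hcast : ((2 * h.val : ℕ) : ZMod q) = 0 := by
        push_cast [ZMod.natCast_val, ZMod.cast_id]
        exact h2h
      rw [ZMod.natCast_eq_zero_iff] at hcast
      have hval : h.val < q := ZMod.val_lt h
      rcases hcast with ⟨c, hc⟩
      have hc2 : c < 2 := by
        by_contra hge
        push_neg at hge
        have : q * 2 ≤ q * c := Nat.mul_le_mul_left q hge
        omega
      have hc01 : c = 0 ∨ c = 1 := by omega
      rcases hc01 with rfl | rfl
      · left
        exact (ZMod.val_eq_zero h).mp (by omega)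
      · right
        have hvt : h.val = t := by omega
        rw [hm, ← hvt, ZMod.natCast_val, ZMod.cast_id]
    · rintro (rfl | rfl)
      · simp
      · have : (2 : ZMod q) * m = 0 := by
          rw [hm]
          have : ((2 * t : ℕ) : ZMod q) = 0 := by
            rw [← hq2t]; exact ZMod.natCast_self q
          push_cast at this
          convert this using 1
        calc (2 : ZMod q) * (p : ZMod q) * m = (p : ZMod q) * ((2 : ZMod q) * m) := by ring
          _ = 0 := by rw [this, mul_zero]
  -- value at m
  have hval_m : ψ (f m) = (((-1 : ℝ) ^ (p * (q : ℤ) / 2 + r) : ℝ) : ℂ) := by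
    have hfm : f m = ((p * (t : ℤ) ^ 2 + r * (t : ℤ) : ℤ) : ZMod q) := by
      push_cast [hf, hm]; ring
    rw [hfm, ZMod.stdAddChar_coe]
    set k : ℤ := p * (t : ℤ) + r with hk
    have hexp : p * (q : ℤ) / 2 + r = k := by
      rw [hk]
      have : (q : ℤ) = 2 * (t : ℤ) := by exact_mod_cast hq2t
      rw [this, mul_comm (2 : ℤ) (t : ℤ), ← mul_assoc, Int.mul_ediv_cancel _ two_ne_zero]
    have hqC : (q : ℂ) = 2 * (t : ℂ) := by exact_mod_cast hq2t
    have ht0 : (t : ℂ) ≠ 0 := by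
      have : 0 < t := by omega
      exact_mod_cast Nat.cast_ne_zero.mpr this.ne'
    have harg : 2 * (Real.pi : ℂ) * Complex.I * ((p * (t : ℤ) ^ 2 + r * (t : ℤ) : ℤ) : ℂ) / (q : ℂ)
        = (k : ℂ) * ((Real.pi : ℂ) * Complex.I) := by
      rw [hqC, hk]
      push_cast
      field_simp
    rw [harg, Complex.exp_int_mul, Complex.exp_pi_mul_I, hexp]
    push_cast
    ring
  -- Main computation: S * conj S
  have key : S * (starRingEnd ℂ) S = (q : ℂ) * (1 + ψ (f m)) := by
    rw [hS', map_sum]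
    simp_rw [hconj]
    rw [Finset.sum_mul_sum]
    have step1 : ∀ x y : ZMod q, ψ (f x) * ψ (-(f y)) = ψ (f x - f y) := by
      intro x y
      rw [← AddChar.map_add_eq_mul, sub_eq_add_neg]
    simp_rw [step1]
    rw [Finset.sum_comm]
    have step2 : ∀ y : ZMod q, ∑ x : ZMod q, ψ (f x - f y)
        = ∑ h : ZMod q, ψ (f (y + h) - f y) := by
      intro y
      exact (Fintype.sum_equiv (Equiv.addLeft y) _ _ (fun h => rfl)).symm
    simp_rw [step2]
    rw [Finset.sum_comm]
    have step3 : ∀ h y : ZMod q, f (y + h) - f y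
        = ((p : ZMod q) * h ^ 2 + (r : ZMod q) * h) + y * ((2 : ZMod q) * (p : ZMod q) * h) := by
      intro h y; rw [hf]; ring
    simp_rw [step3, AddChar.map_add_eq_mul, ← Finset.mul_sum]
    have step4 : ∀ h : ZMod q, ∑ y : ZMod q, ψ (y * ((2 : ZMod q) * (p : ZMod q) * h))
        = if (2 : ZMod q) * (p : ZMod q) * h = 0 then (q : ℂ) else 0 := by
      intro h
      rw [AddChar.sum_mulShift _ (ZMod.isPrimitive_stdAddChar q)]
      simp [ZMod.card]
    simp_rw [step4]
    have step5 : ∀ h : ZMod q,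
        ψ ((p : ZMod q) * h ^ 2) * ψ ((r : ZMod q) * h) *
          (if (2 : ZMod q) * (p : ZMod q) * h = 0 then (q : ℂ) else 0)
        = if h ∈ ({0, m} : Finset (ZMod q)) then ψ (f h) * (q : ℂ) else 0 := by
      intro h
      by_cases hc : (2 : ZMod q) * (p : ZMod q) * h = 0
      · have hmem : h ∈ ({0, m} : Finset (ZMod q)) := by
          rcases (hsol h).mp hc with h0 | hm'
          · rw [h0]; exact Finset.mem_insert_self 0 {m}
          · rw [hm']; exact Finset.mem_insert_of_mem (Finset.mem_singleton_self m)
        rw [if_pos hc, if_pos hmem, ← AddChar.map_add_eq_mul]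
      · rw [if_neg hc, if_neg, mul_zero]
        intro hmem
        apply hc
        rw [hsol h]
        rw [Finset.mem_insert, Finset.mem_singleton] at hmem
        exact hmem
    simp_rw [step5]
    rw [Finset.sum_ite_mem, Finset.univ_inter,
      Finset.sum_insert (by simpa using hm_ne.symm), Finset.sum_singleton]
    have hf0 : f 0 = 0 := by simp [hf]
    rw [hf0, AddChar.map_zero_eq_one]
    ring
  -- conclude
  have habs : ((‖S‖ ^ 2 : ℝ) : ℂ) = S * (starRingEnd ℂ) S := by
    rw [Complex.mul_conj, Complex.sq_norm]
  apply Complex.ofReal_injective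
  rw [habs, key, hval_m]
  push_cast
  ring
end

section
/- Let a > 0, b ∈ ℝ, c ≥ 1, and T > 0. Then the improper integral ∫_T^∞ sin(ax + b) / x^c dx converges, and |∫_T^∞ sin(ax + b)/x^c dx − cos(aT + b)/(a T^c)| ≤ 2c/(a² T^{c+1}). -/
open Filter Topology MeasureTheory Set intervalIntegral

private lemma osc_integrableOn (q T M : ℝ) (hq : q < -1) (hT : 0 < T) (C : ℝ → ℝ)
    (hC : Continuous C) (hM : ∀ x, |C x| ≤ M) :
    IntegrableOn (fun x => x ^ q * C x) (Set.Ioi T) := by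
  have hM0 : 0 ≤ M := le_trans (abs_nonneg _) (hM 0)
  have h1 : IntegrableOn (fun x : ℝ => M * x ^ q) (Set.Ioi T) :=
    (integrableOn_Ioi_rpow_of_lt hq hT).const_mul M
  refine Integrable.mono h1 ?_ ?_
  · exact ((by measurability : Measurable fun x : ℝ => x ^ q).mul hC.measurable).aestronglyMeasurable
  · filter_upwards [ae_restrict_mem measurableSet_Ioi] with x hx
    have hx0 : 0 < x := hT.trans hx
    have hxq : 0 < x ^ q := Real.rpow_pos_of_pos hx0 q
    have h2 : ‖M * x ^ q‖ = x ^ q * M := by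
      rw [Real.norm_eq_abs, abs_of_nonneg (mul_nonneg hM0 hxq.le)]; ring
    rw [h2, norm_mul, Real.norm_eq_abs, Real.norm_eq_abs, abs_of_pos hxq]
    exact mul_le_mul_of_nonneg_left (hM x) hxq.le

private lemma osc_bound (q T M : ℝ) (hq : q < -1) (hT : 0 < T) (C : ℝ → ℝ)
    (hC : Continuous C) (hM : ∀ x, |C x| ≤ M) :
    |∫ x in Set.Ioi T, x ^ q * C x| ≤ M * (-T ^ (q + 1) / (q + 1)) := by
  have hM0 : 0 ≤ M := le_trans (abs_nonneg _) (hM 0)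
  have hint := osc_integrableOn q T M hq hT C hC hM
  have h1 : |∫ x in Set.Ioi T, x ^ q * C x| ≤ ∫ x in Set.Ioi T, ‖x ^ q * C x‖ := by
    rw [← Real.norm_eq_abs]
    exact MeasureTheory.norm_integral_le_integral_norm _
  have h2 : (∫ x in Set.Ioi T, ‖x ^ q * C x‖) ≤ ∫ x in Set.Ioi T, M * x ^ q := by
    refine integral_mono_ae hint.norm ((integrableOn_Ioi_rpow_of_lt hq hT).const_mul M) ?_
    filter_upwards [ae_restrict_mem measurableSet_Ioi] with x hx
    have hx0 : 0 < x := hT.trans hx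
    have hxq : 0 < x ^ q := Real.rpow_pos_of_pos hx0 q
    rw [norm_mul, Real.norm_eq_abs, Real.norm_eq_abs, abs_of_pos hxq, mul_comm M (x ^ q)]
    exact mul_le_mul_of_nonneg_left (hM x) hxq.le
  have h3 : (∫ x in Set.Ioi T, M * x ^ q) = M * (-T ^ (q + 1) / (q + 1)) := by
    rw [MeasureTheory.integral_const_mul, integral_Ioi_rpow_of_lt hq hT]
  exact h1.trans (h2.trans_eq h3)

private lemma osc_key (T p M : ℝ) (hT : 0 < T) (hp : p ≤ -1) (S C : ℝ → ℝ)
    (hd : ∀ x, HasDerivAt C (S x) x) (hS : Continuous S) (hC : Continuous C)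
    (hM : ∀ x, |C x| ≤ M) :
    Tendsto (fun R => ∫ x in T..R, x ^ p * S x) atTop
      (𝓝 (-(T ^ p * C T) - ∫ x in Set.Ioi T, (p * x ^ (p - 1)) * C x)) ∧
    |∫ x in Set.Ioi T, (p * x ^ (p - 1)) * C x| ≤ M * T ^ p := by
  have hM0 : 0 ≤ M := le_trans (abs_nonneg _) (hM 0)
  have hq : p - 1 < -1 := by linarith
  have hintC : IntegrableOn (fun x => x ^ (p - 1) * C x) (Set.Ioi T) :=
    osc_integrableOn (p - 1) T M hq hT C hC hM
  have htail_int : IntegrableOn (fun x => (p * x ^ (p - 1)) * C x) (Set.Ioi T) :=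
    (hintC.const_mul p).congr (Filter.Eventually.of_forall fun x => by ring)
  constructor
  · -- IBP identity for R ≥ T
    have hibp : ∀ R, T ≤ R → (∫ x in T..R, x ^ p * S x) =
        R ^ p * C R - T ^ p * C T - ∫ x in T..R, (p * x ^ (p - 1)) * C x := by
      intro R hR
      refine integral_mul_deriv_eq_deriv_mul (u := fun x => x ^ p)
        (u' := fun x => p * x ^ (p - 1)) (v := C) (v' := S) ?_ (fun x _ => hd x) ?_
        (hS.intervalIntegrable T R)
      · intro x hx
        rw [Set.uIcc_of_le hR] at hx
        have hx0 : 0 < x := hT.trans_le hx.1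
        simpa [mul_comm] using Real.hasDerivAt_rpow_const (x := x) (p := p) (Or.inl hx0.ne')
      · apply ContinuousOn.intervalIntegrable
        rw [Set.uIcc_of_le hR]
        refine continuousOn_const.mul fun x hx => ?_
        have hx0 : 0 < x := hT.trans_le hx.1
        exact (Real.continuousAt_rpow_const x (p - 1) (Or.inl hx0.ne')).continuousWithinAt
    have h1 : Tendsto (fun R : ℝ => R ^ p * C R) atTop (𝓝 0) := by
      have hpos : 0 < -p := by linarith
      have h0 : Tendsto (fun R : ℝ => M * R ^ (-(-p))) atTop (𝓝 (M * 0)) :=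
        (tendsto_rpow_neg_atTop hpos).const_mul M
      rw [mul_zero] at h0
      apply squeeze_zero_norm' _ h0
      filter_upwards [eventually_ge_atTop (max T 1)] with R hR
      have hR0 : 0 < R := hT.trans_le (le_trans (le_max_left _ _) hR)
      have hRp : 0 < R ^ p := Real.rpow_pos_of_pos hR0 p
      rw [norm_mul, Real.norm_eq_abs, Real.norm_eq_abs, abs_of_pos hRp, neg_neg,
        mul_comm M (R ^ p)]
      exact mul_le_mul_of_nonneg_left (hM R) hRp.le
    have h2 : Tendsto (fun R => ∫ x in T..R, (p * x ^ (p - 1)) * C x) atTop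
        (𝓝 (∫ x in Set.Ioi T, (p * x ^ (p - 1)) * C x)) :=
      intervalIntegral_tendsto_integral_Ioi T htail_int tendsto_id
    have h3 : Tendsto (fun R : ℝ =>
        R ^ p * C R - T ^ p * C T - ∫ x in T..R, (p * x ^ (p - 1)) * C x) atTop
        (𝓝 (0 - T ^ p * C T - ∫ x in Set.Ioi T, (p * x ^ (p - 1)) * C x)) :=
      (h1.sub tendsto_const_nhds).sub h2
    rw [zero_sub] at h3
    refine Tendsto.congr' ?_ h3
    filter_upwards [eventually_ge_atTop T] with R hR
    exact (hibp R hR).symm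
  · -- the bound
    have heq : (∫ x in Set.Ioi T, (p * x ^ (p - 1)) * C x)
        = p * ∫ x in Set.Ioi T, x ^ (p - 1) * C x := by
      rw [← MeasureTheory.integral_const_mul]
      exact integral_congr_ae (Filter.Eventually.of_forall fun x => by ring)
    rw [heq, abs_mul]
    have hb := osc_bound (p - 1) T M hq hT C hC hM
    rw [sub_add_cancel] at hb
    have hple : |p| = -p := abs_of_neg (by linarith)
    rw [hple]
    calc -p * |∫ x in Set.Ioi T, x ^ (p - 1) * C x| ≤ -p * (M * (-T ^ p / p)) := by
          apply mul_le_mul_of_nonneg_left hb (by linarith)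
      _ = M * T ^ p := by
          have hp0 : p ≠ 0 := by linarith
          field_simp

theorem oscillatory_integral_estimate (a b c T : ℝ) (ha : 0 < a) (hc : 1 ≤ c) (hT : 0 < T) :
    ∃ L : ℝ,
      Tendsto (fun R : ℝ => ∫ x in T..R, Real.sin (a * x + b) / x ^ c) atTop (nhds L) ∧
        |L - Real.cos (a * T + b) / (a * T ^ c)| ≤ 2 * c / (a ^ 2 * T ^ (c + 1)) := by
  have hlin : ∀ x : ℝ, HasDerivAt (fun x => a * x + b) a x := fun x => by
    simpa using ((hasDerivAt_id x).const_mul a).add_const b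
  -- C1 = -(cos(ax+b)/a), derivative sin(ax+b)
  have hd1 : ∀ x, HasDerivAt (fun x => -(Real.cos (a * x + b) / a)) (Real.sin (a * x + b)) x := by
    intro x
    have h2 : HasDerivAt (fun x => Real.cos (a * x + b)) (-Real.sin (a * x + b) * a) x :=
      (Real.hasDerivAt_cos _).comp x (hlin x)
    have := (h2.div_const a).neg
    exact this.congr_deriv (by field_simp)
  -- C2 = sin(ax+b)/a, derivative cos(ax+b)
  have hd2 : ∀ x, HasDerivAt (fun x => Real.sin (a * x + b) / a) (Real.cos (a * x + b)) x := by
    intro x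
    have h2 : HasDerivAt (fun x => Real.sin (a * x + b)) (Real.cos (a * x + b) * a) x :=
      (Real.hasDerivAt_sin _).comp x (hlin x)
    have := h2.div_const a
    exact this.congr_deriv (by field_simp)
  have hMC1 : ∀ x, |(-(Real.cos (a * x + b) / a))| ≤ 1 / a := fun x => by
    rw [abs_neg, abs_div, abs_of_pos ha]
    gcongr
    exact Real.abs_cos_le_one _
  have hMC2 : ∀ x, |Real.sin (a * x + b) / a| ≤ 1 / a := fun x => by
    rw [abs_div, abs_of_pos ha]
    gcongr
    exact Real.abs_sin_le_one _
  have hlincont : Continuous fun x : ℝ => a * x + b :=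
    (continuous_const.mul continuous_id).add continuous_const
  have hScont1 : Continuous fun x => Real.sin (a * x + b) := Real.continuous_sin.comp hlincont
  have hScont2 : Continuous fun x => Real.cos (a * x + b) := Real.continuous_cos.comp hlincont
  have hCcont1 : Continuous fun x => -(Real.cos (a * x + b) / a) := (hScont2.div_const a).neg
  have hCcont2 : Continuous fun x => Real.sin (a * x + b) / a := hScont1.div_const a
  have hp1 : (-c : ℝ) ≤ -1 := by linarith
  have hp2 : (-c - 1 : ℝ) ≤ -1 := by linarith
  obtain ⟨hT1, _⟩ := osc_key T (-c) (1 / a) hT hp1 _ _ hd1 hScont1 hCcont1 hMC1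
  obtain ⟨hT2, hB2⟩ := osc_key T (-c - 1) (1 / a) hT hp2 _ _ hd2 hScont2 hCcont2 hMC2
  -- the inner improper integral
  set I : ℝ := ∫ x in Set.Ioi T, x ^ (-c - 1 : ℝ) * Real.cos (a * x + b) with hI
  have hIint : IntegrableOn (fun x => x ^ (-c - 1 : ℝ) * Real.cos (a * x + b)) (Set.Ioi T) :=
    osc_integrableOn (-c - 1) T 1 (by linarith) hT _ hScont2 fun x => Real.abs_cos_le_one _
  have hItend : Tendsto (fun R => ∫ x in T..R, x ^ (-c - 1 : ℝ) * Real.cos (a * x + b)) atTop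
      (𝓝 I) := intervalIntegral_tendsto_integral_Ioi T hIint tendsto_id
  have hIeq : I = -(T ^ (-c - 1 : ℝ) * (Real.sin (a * T + b) / a))
      - ∫ x in Set.Ioi T, ((-c - 1) * x ^ (-c - 1 - 1 : ℝ)) * (Real.sin (a * x + b) / a) :=
    tendsto_nhds_unique hItend hT2
  -- bound on I
  have hIbnd : |I| ≤ 2 / a * T ^ (-c - 1 : ℝ) := by
    rw [hIeq]
    have h1 : |(-(T ^ (-c - 1 : ℝ) * (Real.sin (a * T + b) / a)))| ≤ 1 / a * T ^ (-c - 1 : ℝ) := by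
      rw [abs_neg, abs_mul, abs_of_pos (Real.rpow_pos_of_pos hT _), mul_comm]
      exact mul_le_mul_of_nonneg_right (hMC2 T) (Real.rpow_pos_of_pos hT _).le
    calc |_ - _| ≤ _ + _ := abs_sub _ _
      _ ≤ 1 / a * T ^ (-c - 1 : ℝ) + 1 / a * T ^ (-c - 1 : ℝ) := add_le_add h1 hB2
      _ = 2 / a * T ^ (-c - 1 : ℝ) := by ring
  -- relate Tail1 to I
  have hTail1 : (∫ x in Set.Ioi T, ((-c) * x ^ (-c - 1 : ℝ)) * (-(Real.cos (a * x + b) / a)))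
      = c / a * I := by
    rw [hI, ← MeasureTheory.integral_const_mul]
    exact integral_congr_ae (Filter.Eventually.of_forall fun x => by ring)
  set L : ℝ := -(T ^ (-c : ℝ) * (-(Real.cos (a * T + b) / a)))
      - ∫ x in Set.Ioi T, ((-c) * x ^ (-c - 1 : ℝ)) * (-(Real.cos (a * x + b) / a)) with hL
  refine ⟨L, ?_, ?_⟩
  · -- the tendsto, after congruence of integrands
    refine Tendsto.congr' ?_ hT1
    filter_upwards [eventually_ge_atTop T] with R hR
    refine intervalIntegral.integral_congr fun x hx => ?_
    rw [Set.uIcc_of_le hR] at hx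
    have hx0 : 0 < x := hT.trans_le hx.1
    rw [Real.rpow_neg hx0.le, div_eq_mul_inv, mul_comm]
  · -- the bound
    have hTc : (0:ℝ) < T ^ c := Real.rpow_pos_of_pos hT c
    have hhead : -(T ^ (-c : ℝ) * (-(Real.cos (a * T + b) / a)))
        = Real.cos (a * T + b) / (a * T ^ c) := by
      rw [Real.rpow_neg hT.le, div_eq_mul_inv, div_eq_mul_inv, mul_inv]
      ring
    have : L - Real.cos (a * T + b) / (a * T ^ c) = -(c / a * I) := by
      rw [hL, hhead, hTail1]; ring
    rw [this, abs_neg, abs_mul]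
    have hca : |c / a| = c / a := abs_of_pos (by positivity)
    rw [hca]
    have hTc1 : T ^ (-c - 1 : ℝ) = (T ^ (c + 1 : ℝ))⁻¹ := by
      rw [show (-c - 1 : ℝ) = -(c + 1) by ring, Real.rpow_neg hT.le]
    calc c / a * |I| ≤ c / a * (2 / a * T ^ (-c - 1 : ℝ)) :=
          mul_le_mul_of_nonneg_left hIbnd (by positivity)
      _ = 2 * c / (a ^ 2 * T ^ (c + 1 : ℝ)) := by
          rw [hTc1]
          have : (0:ℝ) < T ^ (c + 1 : ℝ) := Real.rpow_pos_of_pos hT _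
          field_simp
end
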